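/- Let (X_i) be a Markov chain on a finite state space with transition matrix P. For a state b let N_t(b) := |{0 ≤ i ≤ t : X_i = b}| be the number of visits to b up to time t, and let T_b := inf{t ≥ 0 : X_t = b}. Then for all states a, b and all t, s ∈ ℕ: E_a[N_t(b)]/E_b[N_t(b)] ≤ Pr_a[T_b ≤ t] ≤ E_a[N_{t+s}(b)]/E_b[N_s(b)]; equivalently, (Σ_{i=0}^t P^i(a,b))/(Σ_{i=0}^t P^i(b,b)) ≤ Pr_a[T_b ≤ t] ≤ (Σ_{i=0}^{t+s} P^i(a,b))/(Σ_{i=0}^s P^i(b,b)). -/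

import Mathlib

open MeasureTheory Filter
open scoped ENNReal NNReal

noncomputable section

namespace FrogWork

/-! ### The underlying probability space

All the randomness used by the particle systems below is extracted from a single sample
`ω` drawn uniformly from `[0,1)`, via its binary digits: the digits of a uniform sample are
i.i.d. fair bits, and regrouping them along the pairing function `Nat.pair` produces a
countable family of i.i.d. uniform-`[0,1]` random variables `unif i`. -/

/-- The base probability space: the uniform measure on `[0,1)`. -/
def μ : Measure ℝ := MeasureTheory.volume.restrict (Set.Ico (0:ℝ) 1)

/-- The `k`-th binary digit of `ω ∈ [0,1)`. -/
def bit (k : ℕ) (ω : ℝ) : ℕ := ⌊ω * 2 ^ (k + 1)⌋₊ % 2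

/-- A countable family of i.i.d. uniform-`[0,1]` random variables. -/
def unif (i : ℕ) (ω : ℝ) : ℝ := ∑' k : ℕ, (bit (Nat.pair i k) ω : ℝ) / 2 ^ (k + 1)

/-- The cumulative distribution function of the Poisson distribution with parameter `l`. -/
def poissonCDF (l : ℝ) (k : ℕ) : ℝ :=
  Real.exp (-l) * ∑ j ∈ Finset.range (k + 1), l ^ j / (Nat.factorial j : ℝ)

/-- Sampling from the Poisson distribution with parameter `l` by inversion of the CDF:
if `u` is uniform on `[0,1)` then `poissonInv l u` is `Pois(l)`-distributed. -/
def poissonInv (l u : ℝ) : ℕ := sInf {k : ℕ | u < poissonCDF l k}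

/-- The walk driven by the random step function `stepF` with seeds `u`, started at `x`. -/
def walkFrom {V : Type*} (stepF : ℝ → V → V) (u : ℕ → ℝ) (x : V) : ℕ → V
  | 0 => x
  | n + 1 => stepF (u n) (walkFrom stepF u x n)

/-- Casting `ℕ∞` to `ℝ≥0∞`. -/
def toENN (m : ℕ∞) : ℝ≥0∞ := if m = ⊤ then ⊤ else ((WithTop.untopD 0 m : ℕ) : ℝ≥0∞)

/-- The real value of an extended natural number (`⊤` is mapped to `0`). -/
def natVal (m : ℕ∞) : ℝ := (WithTop.untopD 0 m : ℕ)

/-! ### The frog model over an abstract random-walk model -/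

/-- The data of a random-walk model on the vertex set `V`: a random step function (driven by
a uniform-`[0,1)` seed) describing one step of the simple random walk on the underlying
graph, together with an (injective) encoding `vidx` of the vertices, used to allocate
independent seeds to the various particles. -/
structure Model (V : Type*) where
  stepF : ℝ → V → V
  vidx : V → ℕ

variable {V : Type*}

/-- The number of sleeping particles initially at `v`: `Pois(lam)`-distributed,
independently over vertices. -/
def Model.count (M : Model V) (lam : ℝ) (v : V) (ω : ℝ) : ℕ :=
  poissonInv lam (unif (Nat.pair 0 (M.vidx v)) ω)

/-- The infinite random walk picked by the `i`-th particle initially at `v`. -/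
def Model.ptraj (M : Model V) (v : V) (i : ℕ) (ω : ℝ) : ℕ → V :=
  walkFrom M.stepF (fun k => unif (Nat.pair 1 (Nat.pair (M.vidx v) (Nat.pair i k))) ω) v

/-- The infinite random walk picked by the planted particle, started at `o`. -/
def Model.planted (M : Model V) (o : V) (ω : ℝ) : ℕ → V :=
  walkFrom M.stepF (fun k => unif (Nat.pair 2 k) ω) o

/-- `M.ell lam U po t tp x y ω` is the least `j` such that the walk picked by one of the
`Pois(lam)` particles initially at `x` (these exist only when `x` lies in the region `U`) is
at `y` at time `j ≤ t` (so particles have lifetime `t`), or such that the walk picked by the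
planted particle is at `y` at time `j ≤ tp` in case the planted particle is present and starts
at `x` (i.e. `po = some x`; the planted particle has lifetime `tp`).  It is `⊤` = `∞` if there
is no such `j`. -/
def Model.ell (M : Model V) (lam : ℝ) (U : Set V) (po : Option V) (t tp : ℕ∞)
    (x y : V) (ω : ℝ) : ℕ∞ :=
  sInf ((fun j : ℕ => (j : ℕ∞)) ''
    {j : ℕ | (x ∈ U ∧ (j : ℕ∞) ≤ t ∧ ∃ i < M.count lam x ω, M.ptraj x i ω j = y)
      ∨ (po = some x ∧ (j : ℕ∞) ≤ tp ∧ M.planted x ω j = y)})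

/-- The activation time `AT(x)` of the vertex `x`, when the particles initially occupying `A`
(together with the planted particle, if present) are the ones active at time `0`: the infimum
of `ℓ(x₀,x₁) + ⋯ + ℓ(x_{m-1},x_m)` over all finite chains `x₀, x₁, …, x_m = x` of vertices
with `x₀ ∈ A`. -/
def Model.actTime (M : Model V) (lam : ℝ) (U : Set V) (po : Option V) (t tp : ℕ∞)
    (A : Set V) (x : V) (ω : ℝ) : ℕ∞ :=
  sInf {s : ℕ∞ | ∃ (m : ℕ) (c : ℕ → V), c 0 ∈ A ∧ c m = x ∧
    s = ∑ i ∈ Finset.range m, M.ell lam U po t tp (c i) (c (i + 1)) ω}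

/-- The set of vertices visited by an active particle before the process dies out. -/
def Model.visited (M : Model V) (lam : ℝ) (U : Set V) (po : Option V) (t tp : ℕ∞)
    (A : Set V) (ω : ℝ) : Set V :=
  {x | M.actTime lam U po t tp A x ω < ⊤}

/-- The susceptibility `𝒮(G)`: the least lifetime `τ ∈ ℕ` for which every vertex is visited
by an active particle before the process dies out, in the frog model with particle density
`lam`, origin `o`, and one planted particle at `o` (the particles at `o` are the initially
active ones). -/
def Model.suscep (M : Model V) (lam : ℝ) (o : V) (ω : ℝ) : ℕ∞ :=
  sInf ((fun τ : ℕ => (τ : ℕ∞)) ''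
    {τ : ℕ | ∀ x : V, M.actTime lam Set.univ (some o) (τ : ℕ∞) (τ : ℕ∞) {o} x ω < ⊤})

/-- The expected susceptibility `E_λ[𝒮(G)]`. -/
def Model.suscepMean (M : Model V) (lam : ℝ) (o : V) : ℝ :=
  (∫⁻ ω, toENN (M.suscep lam o ω) ∂μ).toReal

/-! ### Simple random walk on a finite graph -/

/-- One step of the simple random walk on the graph `G`, driven by a uniform-`[0,1)` seed:
a uniformly chosen neighbour of the current position. -/
def gstep {V : Type*} [Fintype V] (G : SimpleGraph V) (u : ℝ) (v : V) : V := by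
  classical
  exact if h : 0 < (G.neighborFinset v).card then
    ((G.neighborFinset v).equivFin.symm
      ⟨min (⌊u * ((G.neighborFinset v).card : ℝ)⌋₊) ((G.neighborFinset v).card - 1),
        Nat.lt_of_le_of_lt (Nat.min_le_right _ _) (Nat.sub_lt h Nat.one_pos)⟩).1
  else v

/-- The random-walk model associated with the simple random walk on a finite graph. -/
def graphModel {V : Type*} [Fintype V] (G : SimpleGraph V) : Model V :=
  ⟨gstep G, fun v => (Fintype.equivFin V v : ℕ)⟩

/-- The lazy version of a random step function: with probability `1/2` stay put, otherwise
perform a step of the original walk. -/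
def lazyStepF {V : Type*} (f : ℝ → V → V) : ℝ → V → V :=
  fun u v => if u < 1/2 then v else f (2 * u - 1) v

/-! ### The cycle, the torus, and `ℤ^d` -/

/-- One step of the simple random walk on the `n`-cycle `C_n` (with vertex set `ZMod n`):
`+1` or `-1` with probability `1/2` each. -/
def cycleStep (n : ℕ) (u : ℝ) (x : ZMod n) : ZMod n := if u < 1/2 then x + 1 else x - 1

/-- The random-walk model for the `n`-cycle `C_n`. -/
def cycleModel (n : ℕ) : Model (ZMod n) := ⟨cycleStep n, ZMod.val⟩

/-- One step of the simple random walk on the torus `T_d(n)` (with vertex set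
`(ℤ/nℤ)^d`): one of the `2d` moves `± e_i` chosen uniformly at random. -/
def torusStep (d n : ℕ) (u : ℝ) (x : Fin d → ZMod n) : Fin d → ZMod n :=
  fun j => if 2 * (j : ℕ) = min (⌊u * (2 * (d:ℝ))⌋₊) (2 * d - 1) then x j + 1
    else if 2 * (j : ℕ) + 1 = min (⌊u * (2 * (d:ℝ))⌋₊) (2 * d - 1) then x j - 1
    else x j

/-- An injective encoding of the vertices of `T_d(n)` by natural numbers. -/
def torusIdx (d n : ℕ) (x : Fin d → ZMod n) : ℕ :=
  (List.ofFn fun i => (x i).val).foldr Nat.pair 0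

/-- The random-walk model for the torus `T_d(n)`. -/
def torusModel (d n : ℕ) : Model (Fin d → ZMod n) := ⟨torusStep d n, torusIdx d n⟩

/-- One step of the simple random walk on `ℤ^d`. -/
def zdStep (d : ℕ) (u : ℝ) (x : Fin d → ℤ) : Fin d → ℤ :=
  fun j => if 2 * (j : ℕ) = min (⌊u * (2 * (d:ℝ))⌋₊) (2 * d - 1) then x j + 1
    else if 2 * (j : ℕ) + 1 = min (⌊u * (2 * (d:ℝ))⌋₊) (2 * d - 1) then x j - 1
    else x j

/-- `ρ(d) = Pr₀[T₀⁺ = ∞]`: the escape probability of the simple random walk on `ℤ^d`. -/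
def rho (d : ℕ) : ℝ :=
  (μ {ω | ∀ m : ℕ, 0 < m →
    walkFrom (zdStep d) (fun k => unif k ω) (fun _ => (0:ℤ)) m ≠ fun _ => 0}).toReal

/-! ### Cover times by multiple random walks -/

/-- The `w`-th walk of a family of independent simple random walks on `T_d(n)`, each started
from an independent uniformly chosen vertex. -/
def torusWalk (d n : ℕ) (w : ℕ) (ω : ℝ) : ℕ → (Fin d → ZMod n) :=
  walkFrom (torusStep d n) (fun k => unif (Nat.pair 1 (Nat.pair w k)) ω)
    (fun i => ((⌊unif (Nat.pair 0 (Nat.pair w (i : ℕ))) ω * (n:ℝ)⌋₊ : ℕ) : ZMod n))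

/-- `𝒞(T_d(n), t)`: the number of independent uniformly-started simple random walks of
length `t` needed to cover `T_d(n)`. -/
def torusCoverC (d n t : ℕ) (ω : ℝ) : ℕ∞ :=
  sInf ((fun s : ℕ => (s : ℕ∞)) ''
    {s : ℕ | ∀ x : Fin d → ZMod n, ∃ w, 1 ≤ w ∧ w ≤ s ∧ ∃ j ≤ t, torusWalk d n w ω j = x})

/-- `𝒟(T_d(n), s)`: the common walk length needed for `s` independent uniformly-started
simple random walks to cover `T_d(n)`. -/
def torusCoverD (d n s : ℕ) (ω : ℝ) : ℕ∞ :=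
  sInf ((fun t : ℕ => (t : ℕ∞)) ''
    {t : ℕ | ∀ x : Fin d → ZMod n, ∃ w, 1 ≤ w ∧ w ≤ s ∧ ∃ j ≤ t, torusWalk d n w ω j = x})

/-- `E[𝒞(T_d(n), t)]`. -/
def torusCoverCMean (d n t : ℕ) : ℝ := (∫⁻ ω, toENN (torusCoverC d n t ω) ∂μ).toReal

/-- The `w`-th walk of a family of independent simple random walks on the finite graph `G`,
each started from an independent uniformly chosen vertex. -/
def gWalkUnif {V : Type*} [Fintype V] [Nonempty V] (G : SimpleGraph V) (w : ℕ) (ω : ℝ) :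
    ℕ → V :=
  walkFrom (gstep G) (fun k => unif (Nat.pair 1 (Nat.pair w k)) ω)
    ((Fintype.equivFin V).symm
      ⟨min (⌊unif (Nat.pair 0 w) ω * (Fintype.card V : ℝ)⌋₊) (Fintype.card V - 1),
        Nat.lt_of_le_of_lt (Nat.min_le_right _ _) (Nat.sub_lt Fintype.card_pos Nat.one_pos)⟩)

/-- `𝒞(G, t)`: the number of independent uniformly-started simple random walks of length
`t` needed to cover the graph `G`. -/
def gCoverC {V : Type*} [Fintype V] [Nonempty V] (G : SimpleGraph V) (t : ℕ) (ω : ℝ) : ℕ∞ :=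
  sInf ((fun s : ℕ => (s : ℕ∞)) ''
    {s : ℕ | ∀ x : V, ∃ w, 1 ≤ w ∧ w ≤ s ∧ ∃ j ≤ t, gWalkUnif G w ω j = x})

/-! ### Boxes and density in the torus -/

/-- The box of the side-length-`r` partition of `T_d(n)` indexed by
`v ∈ {0, …, ⌊n/r⌋ - 1}^d`: in each coordinate it covers `[v i * r, (v i + 1) * r)`, except
that the boxes with an extremal index absorb the remainder `n mod r` (so that their side
lengths lie in `[r, 2r)`). -/
def box (d n r : ℕ) (v : Fin d → ℕ) : Set (Fin d → ZMod n) :=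
  {x | ∀ i : Fin d, ∃ j : ℕ, x i = (j : ZMod n) ∧ v i * r ≤ j ∧
    j < (if v i + 1 = n / r then n else (v i + 1) * r)}

/-- A set `A ⊆ T_d(n)` is `(α, r)`-dense if it occupies at least an `α`-fraction of every box
of the side-length-`r` partition of `T_d(n)`. -/
def IsDense (d n r : ℕ) (α : ℝ) (A : Set (Fin d → ZMod n)) : Prop :=
  ∀ v : Fin d → ℕ, (∀ i, v i < n / r) →
    α * ((box d n r v).ncard : ℝ) ≤ ((A ∩ box d n r v).ncard : ℝ)

/-! ### Expanders -/

/-- The transition matrix of the simple random walk on `G`. -/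
def transMat {V : Type*} [Fintype V] (G : SimpleGraph V) : Matrix V V ℝ := by
  classical
  exact Matrix.of fun x y => if G.Adj x y then ((G.neighborSet x).ncard : ℝ)⁻¹ else 0

/-- The transition matrix `P_L = (I + P)/2` of the lazy simple random walk on `G`. -/
def lazyMat {V : Type*} [Fintype V] [DecidableEq V] (G : SimpleGraph V) : Matrix V V ℝ :=
  (2:ℝ)⁻¹ • (1 + transMat G)

/-- `G` is a `k`-regular graph. -/
def IsReg {V : Type*} (G : SimpleGraph V) (k : ℕ) : Prop :=
  ∀ v, (G.neighborSet v).ncard = k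

/-- `G` is a `γ`-expander: the spectral gap of the simple random walk on `G` (the second
smallest eigenvalue of `I - P`) is at least `γ`.  By the variational characterisation of
eigenvalues of the symmetric matrix `I - P` (for regular `G`), this says exactly that
`⟪f, (I - P) f⟫ ≥ γ * ⟪f, f⟫` for every `f` orthogonal to the constant functions. -/
def IsExpander {V : Type*} [Fintype V] (G : SimpleGraph V) (γ : ℝ) : Prop :=
  ∀ f : V → ℝ, (∑ v, f v) = 0 →
    γ * ∑ v, (f v) ^ 2 ≤ ∑ v, f v * (f v - ∑ w, transMat G v w * f w)

/-! ### General finite Markov chains -/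

/-- One step of the Markov chain with transition probabilities `P`, sampled by inversion of
the CDF with respect to a fixed enumeration of the (finite) state space. -/
def mcStep {St : Type*} [Fintype St] [Nonempty St] (P : St → St → ℝ) (u : ℝ) (x : St) :
    St := by
  classical
  exact (Fintype.equivFin St).symm
    ⟨min (sInf {k : ℕ | u < ∑ z ∈ Finset.univ.filter
        (fun z => ((Fintype.equivFin St) z : ℕ) ≤ k), P x z}) (Fintype.card St - 1),
      Nat.lt_of_le_of_lt (Nat.min_le_right _ _) (Nat.sub_lt Fintype.card_pos Nat.one_pos)⟩



namespace MCAux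
open Finset

lemma bit_lt_two (k : ℕ) (ω : ℝ) : bit k ω < 2 := Nat.mod_lt _ two_pos

lemma hexp {N k : ℕ} (hk : k < N) : (2:ℕ) ^ (N - k) = 2 * 2 ^ (N - 1 - k) := by
  have : N - k = (N - 1 - k) + 1 := by omega
  rw [this, pow_succ, mul_comm]

/-- D3 -/
lemma sum_bits_lt (N : ℕ) (f : ℕ → ℕ) (hf : ∀ k < N, f k < 2) :
    ∑ k ∈ range N, f k * 2 ^ (N - 1 - k) < 2 ^ N := by
  induction N with
  | zero => simp
  | succ N ih =>
    rw [Finset.sum_range_succ]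
    have e1 : ∑ k ∈ range N, f k * 2 ^ (N + 1 - 1 - k)
        = 2 * ∑ k ∈ range N, f k * 2 ^ (N - 1 - k) := by
      rw [Finset.mul_sum]
      refine Finset.sum_congr rfl fun k hk => ?_
      have hk' := Finset.mem_range.1 hk
      have : N + 1 - 1 - k = N - k := by omega
      rw [this, hexp hk']; ring
    have h2 := ih (fun k hk => hf k (by omega))
    have h3 : f N < 2 := hf N (by omega)
    have : N + 1 - 1 - N = 0 := by omega
    rw [e1, this]
    simp only [pow_zero, mul_one, pow_succ]
    omega

/-- D1 -/
lemma floor_eq_sum_bits (N : ℕ) (ω : ℝ) (h0 : 0 ≤ ω) (h1 : ω < 1) :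
    ⌊ω * 2 ^ N⌋₊ = ∑ k ∈ range N, bit k ω * 2 ^ (N - 1 - k) := by
  induction N with
  | zero => simpa using h1
  | succ N ih =>
    have key : ⌊ω * 2 ^ (N + 1)⌋₊ = 2 * ⌊ω * 2 ^ N⌋₊ + bit N ω := by
      have hdiv : ⌊ω * 2 ^ (N+1)⌋₊ / 2 = ⌊ω * 2 ^ N⌋₊ := by
        rw [← Nat.floor_div_natCast (ω * 2 ^ (N+1)) 2]
        norm_num [pow_succ]
        ring_nf
      have := Nat.div_add_mod (⌊ω * 2 ^ (N+1)⌋₊) 2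
      unfold bit
      omega
    rw [key, Finset.sum_range_succ, ih]
    have e1 : ∑ k ∈ range N, bit k ω * 2 ^ (N + 1 - 1 - k)
        = 2 * ∑ k ∈ range N, bit k ω * 2 ^ (N - 1 - k) := by
      rw [Finset.mul_sum]
      refine Finset.sum_congr rfl fun k hk => ?_
      have hk' := Finset.mem_range.1 hk
      have : N + 1 - 1 - k = N - k := by omega
      rw [this, hexp hk']; ring
    rw [e1]
    have : N + 1 - 1 - N = 0 := by omega
    rw [this]
    ring

/-- D5 -/
lemma sum_digits_eq (N : ℕ) : ∀ m < 2 ^ N,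
    ∑ k ∈ range N, (m / 2 ^ (N - 1 - k) % 2) * 2 ^ (N - 1 - k) = m := by
  induction N with
  | zero => intro m hm; interval_cases m <;> simp
  | succ N ih =>
    intro m hm
    rw [Finset.sum_range_succ]
    have hN0 : N + 1 - 1 - N = 0 := by omega
    have e1 : ∑ k ∈ range N, (m / 2 ^ (N + 1 - 1 - k) % 2) * 2 ^ (N + 1 - 1 - k)
        = 2 * ∑ k ∈ range N, ((m/2) / 2 ^ (N - 1 - k) % 2) * 2 ^ (N - 1 - k) := by
      rw [Finset.mul_sum]
      refine Finset.sum_congr rfl fun k hk => ?_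
      have hk' := Finset.mem_range.1 hk
      have h2 : N + 1 - 1 - k = N - k := by omega
      rw [h2, hexp hk',
        show m / (2 * 2 ^ (N - 1 - k)) = m / 2 / 2 ^ (N - 1 - k) from
          (Nat.div_div_eq_div_mul m 2 _).symm]
      ring
    rw [e1, hN0, ih (m/2) (by omega)]
    simp only [pow_zero, mul_one]
    omega

/-- D2 -/
lemma digit_extract (N : ℕ) : ∀ (f : ℕ → ℕ), (∀ k < N, f k < 2) → ∀ k < N,
    (∑ k' ∈ range N, f k' * 2 ^ (N - 1 - k')) / 2 ^ (N - 1 - k) % 2 = f k := by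
  induction N with
  | zero => omega
  | succ N ih =>
    intro f hf k hk
    have hsplit : ∑ k' ∈ range (N+1), f k' * 2 ^ (N + 1 - 1 - k')
        = f N + 2 * ∑ k' ∈ range N, f k' * 2 ^ (N - 1 - k') := by
      rw [Finset.sum_range_succ]
      have e1 : ∑ k' ∈ range N, f k' * 2 ^ (N + 1 - 1 - k')
          = 2 * ∑ k' ∈ range N, f k' * 2 ^ (N - 1 - k') := by
        rw [Finset.mul_sum]
        refine Finset.sum_congr rfl fun k' hk' => ?_
        have h2 := Finset.mem_range.1 hk'
        have : N + 1 - 1 - k' = N - k' := by omega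
        rw [this, hexp h2]; ring
      rw [e1]
      have : N + 1 - 1 - N = 0 := by omega
      rw [this]; ring
    rw [hsplit]
    rcases Nat.lt_or_ge k N with hkN | hkN
    · have : N + 1 - 1 - k = (N - 1 - k) + 1 := by omega
      rw [this, pow_succ]
      have h2 : (f N + 2 * ∑ k' ∈ range N, f k' * 2 ^ (N - 1 - k')) / (2 ^ (N-1-k) * 2)
          = (∑ k' ∈ range N, f k' * 2 ^ (N - 1 - k')) / 2 ^ (N-1-k) := by
        rw [mul_comm (2 ^ (N-1-k)) 2, ← Nat.div_div_eq_div_mul]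
        congr 1
        have := hf N (by omega)
        omega
      rw [h2, ih f (fun j hj => hf j (by omega)) k hkN]
    · have hkN' : k = N := by omega
      have h0 : N + 1 - 1 - k = 0 := by omega
      rw [h0, hkN']
      simp only [pow_zero, Nat.div_one]
      have := hf N (by omega)
      omega

lemma measurable_bit (k : ℕ) : Measurable (bit k) := by
  have h1 : Measurable fun ω : ℝ => ⌊ω * 2 ^ (k+1)⌋₊ :=
    Nat.measurable_floor.comp (measurable_id.mul_const _)
  exact (measurable_from_top (f := fun n : ℕ => n % 2)).comp h1

lemma bit_eq_floor_digit {N k : ℕ} (hk : k < N) (ω : ℝ) :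
    bit k ω = ⌊ω * 2 ^ N⌋₊ / 2 ^ (N - 1 - k) % 2 := by
  have hpow : (2:ℝ) ^ N = 2 ^ (k+1) * (2^(N-1-k) : ℕ) := by
    push_cast
    rw [← pow_add]
    congr 1
    omega
  have : ω * 2 ^ N / (2^(N-1-k) : ℕ) = ω * 2 ^ (k+1) := by
    rw [hpow]
    push_cast
    field_simp
  rw [← Nat.floor_div_natCast (ω * 2 ^ N) (2^(N-1-k)), this]
  rfl

/-- C1 -/
lemma fullcyl_eq_Ico (N : ℕ) (f : ℕ → ℕ) (hf : ∀ k < N, f k < 2) :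
    {ω : ℝ | ∀ k < N, bit k ω = f k} ∩ Set.Ico 0 1
      = Set.Ico (((∑ k ∈ range N, f k * 2 ^ (N-1-k) : ℕ) : ℝ) / 2^N)
          ((((∑ k ∈ range N, f k * 2 ^ (N-1-k) : ℕ) : ℝ) + 1) / 2^N) := by
  set m : ℕ := ∑ k ∈ range N, f k * 2 ^ (N-1-k) with hm
  have hmlt : m < 2 ^ N := sum_bits_lt N f hf
  have hpow : (0:ℝ) < 2 ^ N := by positivity
  ext ω
  simp only [Set.mem_inter_iff, Set.mem_setOf_eq, Set.mem_Ico]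
  constructor
  · rintro ⟨hb, h0, h1⟩
    have hfl : ⌊ω * 2 ^ N⌋₊ = m := by
      rw [floor_eq_sum_bits N ω h0 h1, hm]
      exact Finset.sum_congr rfl fun k hk => by
        rw [hb k (Finset.mem_range.1 hk)]
    have hω0 : 0 ≤ ω * 2 ^ N := by positivity
    constructor
    · rw [div_le_iff₀ hpow, ← hfl]
      exact Nat.floor_le hω0
    · rw [lt_div_iff₀ hpow, ← hfl]
      exact Nat.lt_floor_add_one _
  · rintro ⟨h0, h1⟩
    have hω0 : 0 ≤ ω := le_trans (by positivity) h0
    have hω1 : ω < 1 := by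
      apply lt_of_lt_of_le h1
      rw [div_le_one hpow]
      have : (m:ℝ) + 1 ≤ (2:ℝ)^N := by
        have := hmlt
        push_cast
        exact_mod_cast Nat.succ_le_of_lt hmlt
      linarith
    have hfl : ⌊ω * 2 ^ N⌋₊ = m := by
      rw [Nat.floor_eq_iff (by positivity)]
      constructor
      · rw [div_le_iff₀ hpow] at h0; linarith
      · rw [lt_div_iff₀ hpow] at h1; push_cast; linarith
    refine ⟨fun k hk => ?_, hω0, hω1⟩
    rw [bit_eq_floor_digit hk, hfl, hm]
    exact digit_extract N f hf k hk

/-- extension of g : Fin N → Fin 2 to ℕ → ℕ -/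
def gext (N : ℕ) (g : Fin N → Fin 2) (k : ℕ) : ℕ :=
  if h : k < N then (g ⟨k, h⟩ : ℕ) else 0

lemma gext_lt (N : ℕ) (g : Fin N → Fin 2) : ∀ k < N, gext N g k < 2 := by
  intro k hk; simp only [gext, dif_pos hk]; exact (g ⟨k, hk⟩).isLt

def mval (N : ℕ) (g : Fin N → Fin 2) : ℕ := ∑ k ∈ range N, gext N g k * 2 ^ (N-1-k)

lemma mval_inj (N : ℕ) : Function.Injective (mval N) := by
  intro g g' h
  funext k
  have h1 := digit_extract N (gext N g) (gext_lt N g) k k.isLt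
  have h2 := digit_extract N (gext N g') (gext_lt N g') k k.isLt
  rw [show (∑ k' ∈ range N, gext N g k' * 2 ^ (N - 1 - k')) = mval N g from rfl] at h1
  rw [show (∑ k' ∈ range N, gext N g' k' * 2 ^ (N - 1 - k')) = mval N g' from rfl] at h2
  have : gext N g (k:ℕ) = gext N g' (k:ℕ) := by rw [← h1, ← h2, h]
  simp only [gext, dif_pos k.isLt] at this
  exact Fin.ext (by simpa using this)


/-- C3 : general cylinder measure -/
lemma meas_cylinder (S : Finset ℕ) (ε : ℕ → ℕ) (hε : ∀ k ∈ S, ε k < 2)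
    (N : ℕ) (hSN : ∀ k ∈ S, k < N) :
    μ {ω : ℝ | ∀ k ∈ S, bit k ω = ε k} = ENNReal.ofReal ((2:ℝ)⁻¹ ^ S.card) := by
  classical
  set Ext : Finset (Fin N → Fin 2) :=
    univ.filter (fun g => ∀ k : Fin N, (k:ℕ) ∈ S → (g k : ℕ) = ε k) with hExt
  have hsplit : {ω : ℝ | ∀ k ∈ S, bit k ω = ε k} ∩ Set.Ico 0 1
      = ⋃ g ∈ Ext, ({ω : ℝ | ∀ k < N, bit k ω = gext N g k} ∩ Set.Ico 0 1) := by
    ext ω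
    simp only [Set.mem_inter_iff, Set.mem_setOf_eq, Set.mem_iUnion, exists_prop]
    constructor
    · rintro ⟨hb, hω⟩
      refine ⟨fun k => ⟨bit (k:ℕ) ω, bit_lt_two _ _⟩, ?_, ⟨fun k hk => ?_, hω⟩⟩
      · rw [hExt, Finset.mem_filter]
        exact ⟨Finset.mem_univ _, fun k hk => hb _ hk⟩
      · simp [gext, dif_pos hk]
    · rintro ⟨g, hg, hb, hω⟩
      rw [hExt, Finset.mem_filter] at hg
      refine ⟨fun k hk => ?_, hω⟩
      have hkN := hSN k hk
      rw [hb k hkN]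
      have := hg.2 ⟨k, hkN⟩ hk
      simpa [gext, dif_pos hkN] using this
  have hIco : ∀ g : Fin N → Fin 2,
      {ω : ℝ | ∀ k < N, bit k ω = gext N g k} ∩ Set.Ico 0 1
        = Set.Ico ((mval N g : ℝ) / 2^N) (((mval N g : ℝ) + 1) / 2^N) :=
    fun g => fullcyl_eq_Ico N (gext N g) (gext_lt N g)
  have hμ : μ {ω : ℝ | ∀ k ∈ S, bit k ω = ε k}
      = volume ({ω : ℝ | ∀ k ∈ S, bit k ω = ε k} ∩ Set.Ico 0 1) := by
    rw [μ, Measure.restrict_apply' measurableSet_Ico]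
  have hpow : (0:ℝ) < 2 ^ N := by positivity
  have key : ∀ m m' : ℕ, m < m' →
      min (((m:ℝ)+1)/2^N) (((m':ℝ)+1)/2^N) ≤ max ((m:ℝ)/2^N) ((m':ℝ)/2^N) := by
    intro m m' h
    have h1 : ((m:ℝ)+1) ≤ (m':ℝ) := by exact_mod_cast h
    calc min (((m:ℝ)+1)/2^N) (((m':ℝ)+1)/2^N) ≤ ((m:ℝ)+1)/2^N := min_le_left _ _
      _ ≤ (m':ℝ)/2^N := by gcongr
      _ ≤ max ((m:ℝ)/2^N) ((m':ℝ)/2^N) := le_max_right _ _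
  have hdisj : (Ext : Set (Fin N → Fin 2)).PairwiseDisjoint
      (fun g => {ω : ℝ | ∀ k < N, bit k ω = gext N g k} ∩ Set.Ico 0 1) := by
    intro g _ g' _ hne
    rw [Function.onFun, hIco g, hIco g', Set.Ico_disjoint_Ico]
    have hmne : mval N g ≠ mval N g' := fun h => hne (mval_inj N h)
    rcases Nat.lt_or_ge (mval N g) (mval N g') with h | h
    · exact key _ _ h
    · have h' : mval N g' < mval N g := by omega
      rw [min_comm, max_comm]
      exact key _ _ h'
  rw [hμ, hsplit, measure_biUnion_finset hdisj
    (fun g _ => by rw [hIco g]; exact measurableSet_Ico)]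
  have hvol : ∀ g : Fin N → Fin 2,
      volume ({ω : ℝ | ∀ k < N, bit k ω = gext N g k} ∩ Set.Ico 0 1)
        = ENNReal.ofReal ((2:ℝ)⁻¹ ^ N) := by
    intro g
    rw [hIco g, Real.volume_Ico]
    congr 1
    field_simp
    rw [← mul_pow]; norm_num
  rw [Finset.sum_congr rfl (fun g _ => hvol g), Finset.sum_const, nsmul_eq_mul]
  -- count Ext
  have hcard : Ext.card = 2 ^ (N - S.card) := by
    have e0 : Ext.card = Fintype.card
        {g : Fin N → Fin 2 // ∀ k : Fin N, (k:ℕ) ∈ S → (g k : ℕ) = ε k} :=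
      (Fintype.card_subtype _).symm
    rw [e0, Fintype.card_congr
      (Equiv.subtypePiEquivPi (p := fun (k : Fin N) (x : Fin 2) => (k:ℕ) ∈ S → (x:ℕ) = ε k)),
      Fintype.card_pi]
    have e1 : ∀ k : Fin N, Fintype.card {x : Fin 2 // (k:ℕ) ∈ S → (x:ℕ) = ε k}
        = if (k:ℕ) ∈ S then 1 else 2 := by
      intro k
      by_cases hk : (k:ℕ) ∈ S
      · rw [if_pos hk]
        rw [Fintype.card_subtype]
        rw [Finset.card_eq_one]
        refine ⟨⟨ε (k:ℕ), hε _ hk⟩, ?_⟩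
        ext x
        simp only [Finset.mem_filter, Finset.mem_univ, true_and, Finset.mem_singleton]
        constructor
        · intro hx; exact Fin.ext (by simpa using hx hk)
        · rintro rfl; intro _; rfl
      · rw [if_neg hk]
        rw [Fintype.card_subtype]
        rw [Finset.filter_true_of_mem (fun x _ => fun h => absurd h hk)]
        simp
    rw [Finset.prod_congr rfl (fun k _ => e1 k), Finset.prod_ite]
    simp only [Finset.prod_const_one, Finset.prod_const, one_mul]
    congr 1
    have hbij : (univ.filter fun k : Fin N => ((k:ℕ) ∈ S)).card = S.card := by
      exact Finset.card_bij' (fun k _ => (k:ℕ)) (fun m hm => (⟨m, hSN m hm⟩ : Fin N))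
        (fun a ha => (Finset.mem_filter.1 ha).2)
        (fun a ha => by simp [Finset.mem_filter, ha])
        (fun a _ => rfl) (fun a _ => rfl)
    have h2 := Finset.card_filter_add_card_filter_not
      (s := (univ : Finset (Fin N))) (p := fun k : Fin N => ((k:ℕ) ∈ S))
    rw [Finset.card_univ, Fintype.card_fin] at h2
    rw [← hbij]
    exact Nat.eq_sub_of_add_eq' h2
  have hsN : S.card ≤ N := by
    have : S ⊆ Finset.range N := fun k hk => Finset.mem_range.2 (hSN k hk)
    simpa using Finset.card_le_card this
  rw [hcard]
  rw [show ((2 ^ (N - S.card) : ℕ) : ℝ≥0∞) = ENNReal.ofReal ((2:ℝ) ^ (N - S.card)) by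
    rw [ENNReal.ofReal_pow (by norm_num)]
    norm_num]
  rw [← ENNReal.ofReal_mul (by positivity)]
  congr 1
  have : (2:ℝ)⁻¹ ^ N = (2:ℝ)⁻¹ ^ (N - S.card) * (2:ℝ)⁻¹ ^ S.card := by
    rw [← pow_add]
    congr 1
    omega
  rw [this, ← mul_assoc, ← mul_pow]
  norm_num

instance : IsProbabilityMeasure μ := by
  constructor
  rw [μ, Measure.restrict_apply' measurableSet_Ico, Set.univ_inter, Real.volume_Ico]
  norm_num

/-- partial sums of unif -/
def pSum (j N : ℕ) (ω : ℝ) : ℝ := ∑ k ∈ range N, (bit (Nat.pair j k) ω : ℝ) / 2 ^ (k+1)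

lemma bit_real_le_one (k : ℕ) (ω : ℝ) : (bit k ω : ℝ) ≤ 1 := by
  have := bit_lt_two k ω; exact_mod_cast Nat.lt_succ_iff.1 this

lemma summable_unif (j : ℕ) (ω : ℝ) :
    Summable (fun k : ℕ => (bit (Nat.pair j k) ω : ℝ) / 2 ^ (k+1)) := by
  apply Summable.of_nonneg_of_le (fun k => by positivity)
    (fun k => ?_) summable_geometric_two
  have h1 : (bit (Nat.pair j k) ω : ℝ) ≤ 1 := bit_real_le_one _ _
  have h2 : (0:ℝ) < 2 ^ (k+1) := by positivity
  calc (bit (Nat.pair j k) ω : ℝ) / 2 ^ (k+1) ≤ 1 / 2^(k+1) := by gcongr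
    _ ≤ (1/2)^k := by
        rw [div_pow, one_pow]
        apply one_div_le_one_div_of_le (by positivity)
        apply pow_le_pow_right₀ one_le_two
        omega

lemma pSum_le_unif (j N : ℕ) (ω : ℝ) : pSum j N ω ≤ unif j ω := by
  rw [unif, ← Summable.sum_add_tsum_nat_add N (summable_unif j ω)]
  have : 0 ≤ ∑' k : ℕ, (bit (Nat.pair j (k + N)) ω : ℝ) / 2 ^ (k + N + 1) :=
    tsum_nonneg (fun k => by positivity)
  unfold pSum
  linarith

lemma tsum_half_pow : ∑' k : ℕ, ((1:ℝ)/2) ^ (k+1) = 1 := by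
  rw [tsum_congr (fun k => show ((1:ℝ)/2)^(k+1) = 1/2/2^k by
    rw [div_pow, one_pow, pow_succ]; ring)]
  exact tsum_geometric_two' 1

lemma unif_le_pSum_add (j N : ℕ) (ω : ℝ) : unif j ω ≤ pSum j N ω + (2:ℝ)⁻¹ ^ N := by
  rw [unif, ← Summable.sum_add_tsum_nat_add N (summable_unif j ω)]
  unfold pSum
  have hs1 : Summable (fun k : ℕ => (bit (Nat.pair j (k + N)) ω : ℝ) / 2 ^ (k + N + 1)) :=
    (summable_nat_add_iff
      (f := fun k : ℕ => (bit (Nat.pair j k) ω : ℝ) / 2 ^ (k + 1)) N).2 (summable_unif j ω)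
  have hs2 : Summable (fun k : ℕ => ((1:ℝ)/2) ^ (k + N + 1)) :=
    (summable_geometric_two.mul_left (((1:ℝ)/2)^(N+1))).congr
      (fun k => by rw [← pow_add]; congr 1; omega)
  have hle : ∀ k : ℕ, (bit (Nat.pair j (k + N)) ω : ℝ) / 2 ^ (k + N + 1)
      ≤ ((1:ℝ)/2) ^ (k + N + 1) := by
    intro k
    have hb : (bit (Nat.pair j (k+N)) ω : ℝ) ≤ 1 := bit_real_le_one _ _
    have h2 : (0:ℝ) < 2 ^ (k+N+1) := by positivity
    calc (bit (Nat.pair j (k+N)) ω : ℝ) / 2 ^ (k+N+1) ≤ 1 / 2^(k+N+1) := by gcongr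
      _ = ((1:ℝ)/2) ^ (k+N+1) := by rw [div_pow, one_pow]
  have h1 : ∑' k : ℕ, (bit (Nat.pair j (k + N)) ω : ℝ) / 2 ^ (k + N + 1)
      ≤ ∑' k : ℕ, ((1:ℝ)/2) ^ (k + N + 1) := Summable.tsum_le_tsum hle hs1 hs2
  have h2 : ∑' k : ℕ, ((1:ℝ)/2) ^ (k + N + 1) = (2:ℝ)⁻¹ ^ N := by
    have : ∀ k : ℕ, ((1:ℝ)/2) ^ (k + N + 1) = ((1:ℝ)/2)^N * ((1/2):ℝ)^(k+1) := by
      intro k; rw [← pow_add]; congr 1; omega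
    rw [tsum_congr this, tsum_mul_left, tsum_half_pow, mul_one, div_pow, one_pow,
      inv_pow, one_div]
  linarith

open scoped Classical in
/-- number of dyadic points in [x, y) -/
def cnt (N : ℕ) (x y : ℝ) : ℕ :=
  ((range (2^N)).filter (fun m : ℕ => x ≤ (m:ℝ)/2^N ∧ (m:ℝ)/2^N < y)).card

open scoped Classical in
lemma cnt_eq (N : ℕ) (x y : ℝ) (hy : y ≤ 1) :
    cnt N x y = ⌈y * 2^N⌉₊ - ⌈x * 2^N⌉₊ := by
  have hpow : (0:ℝ) < 2^N := by positivity
  have heq : (range (2^N)).filter (fun m : ℕ => x ≤ (m:ℝ)/2^N ∧ (m:ℝ)/2^N < y)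
      = Finset.Ico ⌈x * 2^N⌉₊ ⌈y * 2^N⌉₊ := by
    ext m
    simp only [Finset.mem_filter, Finset.mem_range, Finset.mem_Ico]
    have e1 : x ≤ (m:ℝ)/2^N ↔ ⌈x * 2^N⌉₊ ≤ m := by
      rw [le_div_iff₀ hpow, Nat.ceil_le]
    have e2 : (m:ℝ)/2^N < y ↔ m < ⌈y * 2^N⌉₊ := by
      rw [div_lt_iff₀ hpow, Nat.lt_ceil]
    have e3 : ⌈y * 2^N⌉₊ ≤ 2^N := by
      apply Nat.ceil_le.2
      push_cast
      nlinarith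
    constructor
    · rintro ⟨_, h1, h2⟩; exact ⟨e1.1 h1, e2.1 h2⟩
    · rintro ⟨h1, h2⟩; exact ⟨by omega, e1.2 h1, e2.2 h2⟩
  rw [cnt, heq, Nat.card_Ico]

lemma cnt_approx (N : ℕ) (x y : ℝ) (hy1 : y ≤ 1) (hx : -((2:ℝ)⁻¹^N) ≤ x)
    (hy : -((2:ℝ)⁻¹^N) ≤ y) (hxy : x - y ≤ (2:ℝ)⁻¹^N) :
    |(cnt N x y : ℝ) * (2:ℝ)⁻¹^N - (y - x)| ≤ 2 * (2:ℝ)⁻¹^N := by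
  have hpow : (0:ℝ) < 2^N := by positivity
  have hinv : (2:ℝ)⁻¹^N = (2^N)⁻¹ := by rw [inv_pow]
  have hprod : (2:ℝ)^N * (2:ℝ)⁻¹^N = 1 := by
    rw [hinv]; field_simp
  set A := ⌈y * 2^N⌉₊ with hA
  set B := ⌈x * 2^N⌉₊ with hB
  have hA1 : y * 2^N ≤ (A:ℝ) := Nat.le_ceil _
  have hB1 : x * 2^N ≤ (B:ℝ) := Nat.le_ceil _
  have hxN : (-1:ℝ) ≤ x * 2^N := by
    rw [neg_le, ← neg_mul]
    calc -x * 2^N ≤ (2:ℝ)⁻¹^N * 2^N := by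
          apply mul_le_mul_of_nonneg_right _ (le_of_lt hpow)
          linarith
      _ = 1 := by rw [mul_comm]; exact hprod
  have hyN : (-1:ℝ) ≤ y * 2^N := by
    rw [neg_le, ← neg_mul]
    calc -y * 2^N ≤ (2:ℝ)⁻¹^N * 2^N := by
          apply mul_le_mul_of_nonneg_right _ (le_of_lt hpow)
          linarith
      _ = 1 := by rw [mul_comm]; exact hprod
  have hA2 : (A:ℝ) ≤ y * 2^N + 1 := by
    rcases le_or_gt 0 (y * 2^N) with h | h
    · have := Nat.ceil_lt_add_one h
      linarith
    · have : A = 0 := Nat.ceil_eq_zero.2 (le_of_lt h)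
      rw [this]; push_cast; linarith
  have hB2 : (B:ℝ) ≤ x * 2^N + 1 := by
    rcases le_or_gt 0 (x * 2^N) with h | h
    · have := Nat.ceil_lt_add_one h
      linarith
    · have : B = 0 := Nat.ceil_eq_zero.2 (le_of_lt h)
      rw [this]; push_cast; linarith
  rw [cnt_eq N x y hy1, ← hA, ← hB]
  have hinvpos : (0:ℝ) < (2:ℝ)⁻¹^N := by positivity
  rcases le_or_gt B A with h | h
  · have hcast : ((A - B : ℕ) : ℝ) = (A:ℝ) - B := by
      push_cast [h]; ring
    rw [hcast, abs_le]
    constructor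
    · have h1 : (A:ℝ) - B ≥ y*2^N - x*2^N - 1 := by linarith
      have h2 : ((A:ℝ) - B) * (2:ℝ)⁻¹^N ≥ (y*2^N - x*2^N - 1) * (2:ℝ)⁻¹^N :=
        mul_le_mul_of_nonneg_right h1 (le_of_lt hinvpos)
      have h3 : (y*2^N - x*2^N - 1) * (2:ℝ)⁻¹^N = (y - x) * ((2:ℝ)^N * (2:ℝ)⁻¹^N) - (2:ℝ)⁻¹^N := by
        ring
      rw [hprod] at h3
      nlinarith
    · have h1 : (A:ℝ) - B ≤ y*2^N - x*2^N + 1 := by linarith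
      have h2 : ((A:ℝ) - B) * (2:ℝ)⁻¹^N ≤ (y*2^N - x*2^N + 1) * (2:ℝ)⁻¹^N :=
        mul_le_mul_of_nonneg_right h1 (le_of_lt hinvpos)
      have h3 : (y*2^N - x*2^N + 1) * (2:ℝ)⁻¹^N = (y - x) * ((2:ℝ)^N * (2:ℝ)⁻¹^N) + (2:ℝ)⁻¹^N := by
        ring
      rw [hprod] at h3
      nlinarith
  · have hcast : ((A - B : ℕ) : ℝ) = 0 := by
      rw [Nat.sub_eq_zero_of_le (le_of_lt h)]; norm_num
    rw [hcast, zero_mul, abs_le]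
    have hAB : (A:ℝ) + 1 ≤ B := by exact_mod_cast h
    -- y*2^N ≤ A ≤ B - 1 ≤ x*2^N so y - x ≤ 0
    have h1 : y*2^N ≤ x*2^N := by linarith
    have h2 : y - x ≤ 0 := by nlinarith
    constructor
    · linarith
    · linarith

def bigcyl (n N : ℕ) (F : Fin n → Fin N → Fin 2) : Set ℝ :=
  {ω | ∀ (j : Fin n) (k : Fin N), bit (Nat.pair j k) ω = (F j k : ℕ)}

lemma pow_split {N k : ℕ} (hk : k < N) : (2:ℝ)^N = 2^(k+1) * 2^(N-1-k) := by
  rw [← pow_add]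
  congr 1
  omega

lemma pSum_bigcyl {n N : ℕ} {F : Fin n → Fin N → Fin 2} {ω : ℝ}
    (hω : ω ∈ bigcyl n N F) (j : Fin n) :
    pSum (j:ℕ) N ω = (mval N (F j) : ℝ) / 2^N := by
  unfold pSum mval
  rw [Nat.cast_sum, Finset.sum_div]
  apply Finset.sum_congr rfl
  intro k hk
  have hkN := Finset.mem_range.1 hk
  rw [hω j ⟨k, hkN⟩]
  have hg : gext N (F j) k = (F j ⟨k, hkN⟩ : ℕ) := by
    simp [gext, dif_pos hkN]
  rw [hg]
  rw [show ((((F j ⟨k, hkN⟩ : ℕ) * 2^(N-1-k) : ℕ)) : ℝ)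
    = ((F j ⟨k, hkN⟩ : ℕ) : ℝ) * 2^(N-1-k) by push_cast; ring]
  rw [pow_split hkN]
  have h1 : ((2:ℝ))^(k+1) ≠ 0 := by positivity
  have h2 : ((2:ℝ))^(N-1-k) ≠ 0 := by positivity
  field_simp

lemma measurable_bigcyl (n N : ℕ) (F : Fin n → Fin N → Fin 2) :
    MeasurableSet (bigcyl n N F) := by
  have : bigcyl n N F
      = ⋂ (j : Fin n), ⋂ (k : Fin N), (bit (Nat.pair j k)) ⁻¹' {(F j k : ℕ)} := by
    ext ω
    simp [bigcyl, Set.mem_iInter]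
  rw [this]
  exact MeasurableSet.iInter fun j => MeasurableSet.iInter fun k =>
    measurable_bit _ (measurableSet_singleton _)

open scoped Classical in
/-- J : joint dyadic law -/
lemma joint_dyadic (n N : ℕ) (x y : ℕ → ℝ) (hy : ∀ j < n, y j ≤ 1) :
    μ {ω : ℝ | ∀ j < n, x j ≤ pSum j N ω ∧ pSum j N ω < y j}
      = (∏ j ∈ range n, (cnt N (x j) (y j) : ℝ≥0∞))
          * ENNReal.ofReal ((2:ℝ)⁻¹ ^ (n*N)) := by
  set Sat : Finset (Fin n → Fin N → Fin 2) :=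
    univ.filter (fun F => ∀ j : Fin n,
      x j ≤ (mval N (F j) : ℝ)/2^N ∧ (mval N (F j) : ℝ)/2^N < y j) with hSat
  have hev : {ω : ℝ | ∀ j < n, x j ≤ pSum j N ω ∧ pSum j N ω < y j}
      = ⋃ F ∈ Sat, bigcyl n N F := by
    ext ω
    simp only [Set.mem_setOf_eq, Set.mem_iUnion, exists_prop]
    constructor
    · intro h
      set F : Fin n → Fin N → Fin 2 :=
        fun j k => ⟨bit (Nat.pair j k) ω, bit_lt_two _ _⟩ with hF
      have hωF : ω ∈ bigcyl n N F := fun j k => rfl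
      refine ⟨F, ?_, hωF⟩
      rw [hSat, Finset.mem_filter]
      refine ⟨Finset.mem_univ _, fun j => ?_⟩
      rw [← pSum_bigcyl hωF j]
      exact h (j:ℕ) j.isLt
    · rintro ⟨F, hFSat, hωF⟩
      intro j hj
      rw [hSat, Finset.mem_filter] at hFSat
      have := hFSat.2 ⟨j, hj⟩
      rw [← pSum_bigcyl hωF ⟨j, hj⟩] at this
      exact this
  have hdisj : (Sat : Set (Fin n → Fin N → Fin 2)).PairwiseDisjoint (bigcyl n N) := by
    intro F _ F' _ hne
    rw [Function.onFun, Set.disjoint_left]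
    intro ω hω hω'
    apply hne
    funext j k
    have h1 := hω j k
    have h2 := hω' j k
    exact Fin.ext (by omega)
  have hcylmeas : ∀ F : Fin n → Fin N → Fin 2,
      μ (bigcyl n N F) = ENNReal.ofReal ((2:ℝ)⁻¹ ^ (n*N)) := by
    intro F
    set S : Finset ℕ := (range n ×ˢ range N).image (fun p => Nat.pair p.1 p.2) with hS
    set ε : ℕ → ℕ := fun p =>
      if h : (Nat.unpair p).1 < n ∧ (Nat.unpair p).2 < N
      then (F ⟨(Nat.unpair p).1, h.1⟩ ⟨(Nat.unpair p).2, h.2⟩ : ℕ) else 0 with hε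
    have hset : bigcyl n N F = {ω : ℝ | ∀ k ∈ S, bit k ω = ε k} := by
      ext ω
      simp only [bigcyl, Set.mem_setOf_eq]
      constructor
      · intro h p hp
        rw [hS, Finset.mem_image] at hp
        obtain ⟨⟨a, b⟩, hab, rfl⟩ := hp
        rw [Finset.mem_product, Finset.mem_range, Finset.mem_range] at hab
        have : ε (Nat.pair a b) = (F ⟨a, hab.1⟩ ⟨b, hab.2⟩ : ℕ) := by
          rw [hε]
          simp only [Nat.unpair_pair]
          rw [dif_pos ⟨hab.1, hab.2⟩]
        rw [this]
        exact h ⟨a, hab.1⟩ ⟨b, hab.2⟩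
      · intro h j k
        have hp : Nat.pair (j:ℕ) (k:ℕ) ∈ S := by
          rw [hS, Finset.mem_image]
          exact ⟨((j:ℕ), (k:ℕ)), by
            rw [Finset.mem_product, Finset.mem_range, Finset.mem_range]
            exact ⟨j.isLt, k.isLt⟩, rfl⟩
        have := h _ hp
        rw [hε] at this
        simp only [Nat.unpair_pair] at this
        rw [dif_pos ⟨j.isLt, k.isLt⟩] at this
        simpa using this
    have hvals : ∀ k ∈ S, ε k < 2 := by
      intro k _
      rw [hε]
      simp only
      split
      · exact (F _ _).isLt
      · omega
    have hcard : S.card = n * N := by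
      rw [hS, Finset.card_image_of_injOn (fun p _ q _ h => by
        obtain ⟨h1, h2⟩ := Nat.pair_eq_pair.1 h
        exact Prod.ext h1 h2)]
      rw [Finset.card_product, Finset.card_range, Finset.card_range]
    rw [hset, meas_cylinder S ε hvals (S.sup id + 1)
      (fun k hk => Nat.lt_succ_of_le (Finset.le_sup (f := id) hk)), hcard]
  rw [hev, measure_biUnion_finset hdisj (fun F _ => measurable_bigcyl n N F)]
  rw [Finset.sum_congr rfl (fun F _ => hcylmeas F), Finset.sum_const, nsmul_eq_mul]
  congr 1
  -- card Sat = ∏ cnt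
  rw [show (∏ j ∈ range n, (cnt N (x j) (y j) : ℝ≥0∞))
      = ((∏ j ∈ range n, cnt N (x j) (y j) : ℕ) : ℝ≥0∞) by push_cast; rfl]
  congr 1
  have e0 : Sat.card = Fintype.card
      {F : Fin n → Fin N → Fin 2 // ∀ j : Fin n,
        x j ≤ (mval N (F j) : ℝ)/2^N ∧ (mval N (F j) : ℝ)/2^N < y j} :=
    (Fintype.card_subtype _).symm
  rw [e0, Fintype.card_congr (Equiv.subtypePiEquivPi
    (p := fun (j : Fin n) (h : Fin N → Fin 2) =>
      x j ≤ (mval N h : ℝ)/2^N ∧ (mval N h : ℝ)/2^N < y j)),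
    Fintype.card_pi]
  rw [← Fin.prod_univ_eq_prod_range (fun j => cnt N (x j) (y j)) n]
  apply Finset.prod_congr rfl
  intro j _
  rw [Fintype.card_subtype]
  apply Finset.card_bij' (fun h _ => mval N h)
    (fun m hm => fun k : Fin N => (⟨m / 2^(N-1-(k:ℕ)) % 2, Nat.mod_lt _ two_pos⟩ : Fin 2))
  · intro h hh
    rw [Finset.mem_filter] at hh ⊢
    exact ⟨Finset.mem_range.2 (sum_bits_lt N (gext N h) (gext_lt N h)), hh.2⟩
  · intro m hm
    rw [Finset.mem_filter] at hm ⊢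
    obtain ⟨hmr, hmc⟩ := hm
    have hmN := Finset.mem_range.1 hmr
    have : mval N (fun k : Fin N => (⟨m / 2^(N-1-(k:ℕ)) % 2, Nat.mod_lt _ two_pos⟩ : Fin 2)) = m := by
      unfold mval
      rw [Finset.sum_congr rfl (fun k hk => by
        rw [show gext N _ k = m / 2^(N-1-k) % 2 from by
          simp [gext, dif_pos (Finset.mem_range.1 hk)]])]
      exact sum_digits_eq N m hmN
    rw [this]
    exact ⟨Finset.mem_univ _, hmc⟩
  · intro h _
    funext k
    apply Fin.ext
    have := digit_extract N (gext N h) (gext_lt N h) (k:ℕ) k.isLt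
    simp only
    rw [show (∑ k' ∈ range N, gext N h k' * 2 ^ (N - 1 - k')) = mval N h from rfl] at this
    rw [this]
    simp [gext, dif_pos k.isLt]
  · intro m hm
    rw [Finset.mem_filter] at hm
    have hmN := Finset.mem_range.1 hm.1
    unfold mval
    rw [Finset.sum_congr rfl (fun k hk => by
      rw [show gext N _ k = m / 2^(N-1-k) % 2 from by
        simp [gext, dif_pos (Finset.mem_range.1 hk)]])]
    exact sum_digits_eq N m hmN

lemma tendsto_half_pow : Tendsto (fun N : ℕ => (2:ℝ)⁻¹ ^ N) atTop (nhds 0) := by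
  apply tendsto_pow_atTop_nhds_zero_of_lt_one (by norm_num) (by norm_num)

/-- U : joint uniform law -/
lemma unif_joint (n : ℕ) (c d : ℕ → ℝ) (hc : ∀ j < n, 0 ≤ c j)
    (hcd : ∀ j < n, c j ≤ d j) (hd : ∀ j < n, d j ≤ 1) :
    μ {ω : ℝ | ∀ j < n, c j ≤ unif j ω ∧ unif j ω < d j}
      = ENNReal.ofReal (∏ j ∈ range n, (d j - c j)) := by
  classical
  set E := {ω : ℝ | ∀ j < n, c j ≤ unif j ω ∧ unif j ω < d j} with hE
  set lowreal : ℕ → ℝ :=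
    fun N => ∏ j ∈ range n, ((cnt N (c j) (d j - (2:ℝ)⁻¹^N) : ℝ) * (2:ℝ)⁻¹^N) with hlowreal
  set upreal : ℕ → ℝ :=
    fun N => ∏ j ∈ range n, ((cnt N (c j - (2:ℝ)⁻¹^N) (d j) : ℝ) * (2:ℝ)⁻¹^N) with hupreal
  have hprodform : ∀ (u v : ℕ → ℝ) (N : ℕ),
      ((∏ j ∈ range n, (cnt N (u j) (v j) : ℝ≥0∞)) * ENNReal.ofReal ((2:ℝ)⁻¹ ^ (n*N))).toReal
        = ∏ j ∈ range n, ((cnt N (u j) (v j) : ℝ) * (2:ℝ)⁻¹^N) := by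
    intro u v N
    rw [ENNReal.toReal_mul, ENNReal.toReal_ofReal (by positivity)]
    rw [show (∏ j ∈ range n, (cnt N (u j) (v j) : ℝ≥0∞))
        = ((∏ j ∈ range n, cnt N (u j) (v j) : ℕ) : ℝ≥0∞) by push_cast; rfl]
    simp only [ENNReal.toReal_natCast]
    rw [Finset.prod_mul_distrib, Finset.prod_const, Finset.card_range,
      show ((2:ℝ)⁻¹^N)^n = (2:ℝ)⁻¹^(n*N) by rw [← pow_mul, mul_comm]]
    push_cast
    ring
  have hEfin : μ E ≠ ⊤ := measure_ne_top μ E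
  have hinvpos : ∀ N : ℕ, (0:ℝ) < (2:ℝ)⁻¹^N := fun N => by positivity
  have hlow : ∀ N : ℕ, lowreal N ≤ (μ E).toReal := by
    intro N
    have hsub : {ω : ℝ | ∀ j < n, c j ≤ pSum j N ω ∧ pSum j N ω < d j - (2:ℝ)⁻¹^N} ⊆ E := by
      intro ω h
      intro j hj
      obtain ⟨h1, h2⟩ := h j hj
      have g1 := pSum_le_unif j N ω
      have g2 := unif_le_pSum_add j N ω
      exact ⟨by linarith, by linarith⟩
    have hμle := measure_mono (μ := μ) hsub
    have := joint_dyadic n N c (fun j => d j - (2:ℝ)⁻¹^N)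
      (fun j hj => by have := hd j hj; have := hinvpos N; linarith)
    rw [hlowreal]
    simp only
    rw [← hprodform c (fun j => d j - (2:ℝ)⁻¹^N) N, ← this]
    exact ENNReal.toReal_mono hEfin hμle
  have hup : ∀ N : ℕ, (μ E).toReal ≤ upreal N := by
    intro N
    have hsub : E ⊆ {ω : ℝ | ∀ j < n, c j - (2:ℝ)⁻¹^N ≤ pSum j N ω ∧ pSum j N ω < d j} := by
      intro ω h
      intro j hj
      obtain ⟨h1, h2⟩ := h j hj
      have g1 := pSum_le_unif j N ω
      have g2 := unif_le_pSum_add j N ω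
      exact ⟨by linarith, by linarith⟩
    have hμle := measure_mono (μ := μ) hsub
    have := joint_dyadic n N (fun j => c j - (2:ℝ)⁻¹^N) d hd
    rw [hupreal]
    simp only
    rw [← hprodform (fun j => c j - (2:ℝ)⁻¹^N) d N, ← this]
    exact ENNReal.toReal_mono (by simp [this]) hμle
  have hlimlow : Tendsto lowreal atTop (nhds (∏ j ∈ range n, (d j - c j))) := by
    apply tendsto_finset_prod
    intro j hj
    have hjn := Finset.mem_range.1 hj
    apply tendsto_of_tendsto_of_tendsto_of_le_of_le
      (g := fun N : ℕ => (d j - c j) - 3 * (2:ℝ)⁻¹^N)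
      (h := fun N : ℕ => (d j - c j) + 3 * (2:ℝ)⁻¹^N)
    · have : Tendsto (fun N : ℕ => (d j - c j) - 3 * (2:ℝ)⁻¹^N) atTop
          (nhds ((d j - c j) - 3 * 0)) :=
        tendsto_const_nhds.sub (tendsto_half_pow.const_mul 3)
      simpa using this
    · have : Tendsto (fun N : ℕ => (d j - c j) + 3 * (2:ℝ)⁻¹^N) atTop
          (nhds ((d j - c j) + 3 * 0)) :=
        tendsto_const_nhds.add (tendsto_half_pow.const_mul 3)
      simpa using this
    · intro N
      have happ := cnt_approx N (c j) (d j - (2:ℝ)⁻¹^N)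
        (by have := hd j hjn; have := hinvpos N; linarith)
        (by have := hc j hjn; have := hinvpos N; linarith)
        (by have := hc j hjn; have := hcd j hjn; have := hinvpos N; linarith)
        (by have := hcd j hjn; have := hinvpos N; linarith)
      rw [abs_le] at happ
      have := hinvpos N
      linarith [happ.1]
    · intro N
      have happ := cnt_approx N (c j) (d j - (2:ℝ)⁻¹^N)
        (by have := hd j hjn; have := hinvpos N; linarith)
        (by have := hc j hjn; have := hinvpos N; linarith)
        (by have := hc j hjn; have := hcd j hjn; have := hinvpos N; linarith)
        (by have := hcd j hjn; have := hinvpos N; linarith)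
      rw [abs_le] at happ
      have := hinvpos N
      linarith [happ.2]
  have hlimup : Tendsto upreal atTop (nhds (∏ j ∈ range n, (d j - c j))) := by
    apply tendsto_finset_prod
    intro j hj
    have hjn := Finset.mem_range.1 hj
    apply tendsto_of_tendsto_of_tendsto_of_le_of_le
      (g := fun N : ℕ => (d j - c j) - 3 * (2:ℝ)⁻¹^N)
      (h := fun N : ℕ => (d j - c j) + 3 * (2:ℝ)⁻¹^N)
    · have : Tendsto (fun N : ℕ => (d j - c j) - 3 * (2:ℝ)⁻¹^N) atTop
          (nhds ((d j - c j) - 3 * 0)) :=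
        tendsto_const_nhds.sub (tendsto_half_pow.const_mul 3)
      simpa using this
    · have : Tendsto (fun N : ℕ => (d j - c j) + 3 * (2:ℝ)⁻¹^N) atTop
          (nhds ((d j - c j) + 3 * 0)) :=
        tendsto_const_nhds.add (tendsto_half_pow.const_mul 3)
      simpa using this
    · intro N
      have happ := cnt_approx N (c j - (2:ℝ)⁻¹^N) (d j)
        (hd j hjn)
        (by have := hc j hjn; linarith)
        (by have := hc j hjn; have := hcd j hjn; have := hinvpos N; linarith)
        (by have := hcd j hjn; have := hinvpos N; linarith)
      rw [abs_le] at happ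
      have := hinvpos N
      linarith [happ.1]
    · intro N
      have happ := cnt_approx N (c j - (2:ℝ)⁻¹^N) (d j)
        (hd j hjn)
        (by have := hc j hjn; linarith)
        (by have := hc j hjn; have := hcd j hjn; have := hinvpos N; linarith)
        (by have := hcd j hjn; have := hinvpos N; linarith)
      rw [abs_le] at happ
      have := hinvpos N
      linarith [happ.2]
  have htoReal : (μ E).toReal = ∏ j ∈ range n, (d j - c j) := by
    exact le_antisymm (ge_of_tendsto' hlimup hup) (le_of_tendsto' hlimlow hlow)
  rw [← htoReal, ENNReal.ofReal_toReal hEfin]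

lemma measurable_pSum (j N : ℕ) : Measurable (fun ω => pSum j N ω) := by
  apply Finset.measurable_sum
  intro k _
  exact (measurable_from_top.comp (measurable_bit (Nat.pair j k))).div_const _

lemma measurable_unif (j : ℕ) : Measurable (unif j) := by
  apply measurable_of_tendsto_metrizable (f := fun N ω => pSum j N ω) (measurable_pSum j)
  rw [tendsto_pi_nhds]
  intro ω
  exact (summable_unif j ω).hasSum.tendsto_sum_nat

lemma sum_half_pow_range (m : ℕ) :
    ∑ k ∈ range m, ((2:ℝ)⁻¹)^(k+1) = 1 - (2:ℝ)⁻¹^m := by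
  induction m with
  | zero => simp
  | succ m ih =>
    rw [Finset.sum_range_succ, ih, pow_succ]
    ring

lemma pSum_le (j N : ℕ) (ω : ℝ) : pSum j N ω ≤ 1 - (2:ℝ)⁻¹^N := by
  rw [← sum_half_pow_range]
  apply Finset.sum_le_sum
  intro k _
  have hb : (bit (Nat.pair j k) ω : ℝ) ≤ 1 := bit_real_le_one _ _
  have h2 : (0:ℝ) < 2 ^ (k+1) := by positivity
  calc (bit (Nat.pair j k) ω : ℝ) / 2 ^ (k+1) ≤ 1 / 2^(k+1) := by gcongr
    _ = ((2:ℝ)⁻¹)^(k+1) := by rw [inv_pow, one_div]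

lemma unif_nonneg (j : ℕ) (ω : ℝ) : 0 ≤ unif j ω :=
  tsum_nonneg (fun k => by positivity)

lemma unif_le_one (j : ℕ) (ω : ℝ) : unif j ω ≤ 1 := by
  have h := unif_le_pSum_add j 0 ω
  have h2 := pSum_le j 0 ω
  simp only [pow_zero] at h h2
  unfold pSum at h h2
  simp at h h2
  linarith

lemma null_unif_one (j : ℕ) : μ {ω : ℝ | unif j ω = 1} = 0 := by
  have hsub : ∀ m : ℕ, {ω : ℝ | unif j ω = 1}
      ⊆ {ω : ℝ | ∀ k ∈ (range m).image (Nat.pair j), bit k ω = 1} := by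
    intro m ω hω
    intro k hk
    rw [Finset.mem_image] at hk
    obtain ⟨k0, hk0, rfl⟩ := hk
    by_contra hne
    have hb0 : bit (Nat.pair j k0) ω = 0 := by
      have := bit_lt_two (Nat.pair j k0) ω; omega
    have h1 : pSum j (k0+1) ω = pSum j k0 ω := by
      unfold pSum
      rw [Finset.sum_range_succ, hb0]
      simp
    have h2 := pSum_le j k0 ω
    have h3 := unif_le_pSum_add j (k0+1) ω
    rw [h1] at h3
    have hωe : unif j ω = 1 := hω
    have hp : (0:ℝ) < (2:ℝ)⁻¹^k0 := by positivity
    have hps : ((2:ℝ)⁻¹)^(k0+1) < (2:ℝ)⁻¹^k0 := by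
      rw [pow_succ]
      nlinarith
    rw [hωe] at h3
    linarith
  have hmeas : ∀ m : ℕ, μ {ω : ℝ | ∀ k ∈ (range m).image (Nat.pair j), bit k ω = 1}
      = ENNReal.ofReal ((2:ℝ)⁻¹ ^ m) := by
    intro m
    have hcard : ((range m).image (Nat.pair j)).card = m := by
      rw [Finset.card_image_of_injective _ (fun a b h => (Nat.pair_eq_pair.1 h).2),
        Finset.card_range]
    calc μ {ω : ℝ | ∀ k ∈ (range m).image (Nat.pair j), bit k ω = 1}
        = ENNReal.ofReal ((2:ℝ)⁻¹ ^ ((range m).image (Nat.pair j)).card) :=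
          meas_cylinder _ (fun _ => 1) (fun k _ => one_lt_two)
            (((range m).image (Nat.pair j)).sup id + 1)
            (fun k hk => Nat.lt_succ_of_le (Finset.le_sup (f := id) hk))
      _ = ENNReal.ofReal ((2:ℝ)⁻¹ ^ m) := by rw [hcard]
  have hle : ∀ m : ℕ, μ {ω : ℝ | unif j ω = 1} ≤ ENNReal.ofReal ((2:ℝ)⁻¹ ^ m) := by
    intro m
    rw [← hmeas m]
    exact measure_mono (hsub m)
  have hlim : Tendsto (fun m : ℕ => ENNReal.ofReal ((2:ℝ)⁻¹ ^ m)) atTop (nhds 0) := by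
    have := ENNReal.tendsto_ofReal tendsto_half_pow
    simpa using this
  exact le_antisymm (ge_of_tendsto' hlim hle) zero_le

section MC
variable {St : Type} [Fintype St] [DecidableEq St] [Nonempty St]

def idx (z : St) : ℕ := (Fintype.equivFin St z : ℕ)

lemma idx_inj : Function.Injective (idx (St := St)) := by
  intro a b h
  exact (Fintype.equivFin St).injective (Fin.ext h)

lemma idx_lt_card (z : St) : idx z < Fintype.card St := (Fintype.equivFin St z).isLt

def Fcdf (P : St → St → ℝ) (x : St) (k : ℕ) : ℝ :=
  ∑ z ∈ Finset.univ.filter (fun z => ((Fintype.equivFin St) z : ℕ) ≤ k), P x z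

def loS (P : St → St → ℝ) (x y : St) : ℝ :=
  ∑ z ∈ Finset.univ.filter (fun z => idx z < idx y), P x z

variable {P : St → St → ℝ} (hn : ∀ x y, 0 ≤ P x y) (hst : ∀ x, ∑ y, P x y = 1)

include hn in
lemma Fcdf_nonneg (x : St) (k : ℕ) : 0 ≤ Fcdf P x k :=
  Finset.sum_nonneg fun z _ => hn x z

include hn hst in
lemma Fcdf_le_one (x : St) (k : ℕ) : Fcdf P x k ≤ 1 := by
  rw [← hst x]
  exact Finset.sum_le_sum_of_subset_of_nonneg (Finset.filter_subset _ _)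
    (fun z _ _ => hn x z)

include hst in
lemma Fcdf_top (x : St) : Fcdf P x (Fintype.card St - 1) = 1 := by
  rw [Fcdf, Finset.filter_true_of_mem, ← hst x]
  intro z _
  have := idx_lt_card z
  unfold idx at this
  omega

include hn in
lemma Fcdf_mono (x : St) {k k' : ℕ} (h : k ≤ k') : Fcdf P x k ≤ Fcdf P x k' := by
  apply Finset.sum_le_sum_of_subset_of_nonneg _ (fun z _ _ => hn x z)
  intro z hz
  rw [Finset.mem_filter] at hz ⊢
  exact ⟨hz.1, le_trans hz.2 h⟩

include hn in
lemma loS_nonneg (x y : St) : 0 ≤ loS P x y :=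
  Finset.sum_nonneg fun z _ => hn x z

lemma hiS_eq (x y : St) : Fcdf P x (idx y) = loS P x y + P x y := by
  rw [Fcdf, loS, show Finset.univ.filter (fun z : St => ((Fintype.equivFin St) z : ℕ) ≤ idx y)
      = insert y (Finset.univ.filter (fun z => idx z < idx y)) from ?_,
    Finset.sum_insert (by simp)]
  · ring
  · ext z
    simp only [Finset.mem_filter, Finset.mem_univ, true_and, Finset.mem_insert]
    constructor
    · intro h
      rcases eq_or_lt_of_le h with h | h
      · left; exact idx_inj h
      · right; exact h
    · rintro (rfl | h)
      · rfl
      · exact le_of_lt h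

lemma loS_eq_Fcdf (x y : St) (h : idx y ≠ 0) : loS P x y = Fcdf P x (idx y - 1) := by
  rw [loS, Fcdf]
  apply Finset.sum_congr _ (fun _ _ => rfl)
  ext z
  simp only [Finset.mem_filter, Finset.mem_univ, true_and]
  unfold idx at h ⊢
  omega

lemma loS_zero (x y : St) (h : idx y = 0) : loS P x y = 0 := by
  rw [loS, Finset.filter_false_of_mem, Finset.sum_empty]
  intro z _
  omega

include hn hst in
lemma mcStep_eq_iff {u : ℝ} (h0 : 0 ≤ u) (h1 : u < 1) (x y : St) :
    mcStep P u x = y ↔ loS P x y ≤ u ∧ u < Fcdf P x (idx y) := by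
  have hSet : {k : ℕ | u < ∑ z ∈ Finset.univ.filter
      (fun z => ((Fintype.equivFin St) z : ℕ) ≤ k), P x z} = {k : ℕ | u < Fcdf P x k} := rfl
  have hmem : (Fintype.card St - 1) ∈ {k : ℕ | u < Fcdf P x k} := by
    rw [Set.mem_setOf_eq, Fcdf_top hst x]
    exact h1
  have hne : {k : ℕ | u < Fcdf P x k}.Nonempty := ⟨_, hmem⟩
  have hsinf_le : sInf {k : ℕ | u < Fcdf P x k} ≤ Fintype.card St - 1 := Nat.sInf_le hmem
  have hmin : min (sInf {k : ℕ | u < Fcdf P x k}) (Fintype.card St - 1)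
      = sInf {k : ℕ | u < Fcdf P x k} := min_eq_left hsinf_le
  have hiff : mcStep P u x = y ↔
      min (sInf {k : ℕ | u < Fcdf P x k}) (Fintype.card St - 1) = idx y := by
    unfold mcStep
    constructor
    · intro h
      have h2 := congrArg (fun z : St => ((Fintype.equivFin St) z : ℕ)) h
      simp only [Equiv.apply_symm_apply] at h2
      exact h2
    · intro h
      have h3 : (⟨min (sInf {k : ℕ | u < ∑ z ∈ Finset.univ.filter
          (fun z => ((Fintype.equivFin St) z : ℕ) ≤ k), P x z}) (Fintype.card St - 1),
          Nat.lt_of_le_of_lt (Nat.min_le_right _ _)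
            (Nat.sub_lt Fintype.card_pos Nat.one_pos)⟩ : Fin (Fintype.card St))
          = Fintype.equivFin St y := Fin.ext h
      exact (congrArg (Fintype.equivFin St).symm h3).trans (Equiv.symm_apply_apply _ _)
  rw [hiff, hmin]
  constructor
  · intro h
    have hmemInf := Nat.sInf_mem hne
    rw [h] at hmemInf
    refine ⟨?_, hmemInf⟩
    by_cases hy0 : idx y = 0
    · rw [loS_zero x y hy0]; exact h0
    · rw [loS_eq_Fcdf x y hy0]
      by_contra hlt
      push_neg at hlt
      have : idx y - 1 ∈ {k : ℕ | u < Fcdf P x k} := hlt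
      have := Nat.sInf_le this
      omega
  · rintro ⟨hl, hr⟩
    have h1' : sInf {k : ℕ | u < Fcdf P x k} ≤ idx y := Nat.sInf_le hr
    rcases eq_or_lt_of_le h1' with h | h
    · exact h
    · exfalso
      have hmemInf := Nat.sInf_mem hne
      have hle : Fcdf P x (sInf {k : ℕ | u < Fcdf P x k}) ≤ loS P x y := by
        by_cases hy0 : idx y = 0
        · omega
        · rw [loS_eq_Fcdf x y hy0]
          exact Fcdf_mono hn x (by omega)
      rw [Set.mem_setOf_eq] at hmemInf
      linarith

include hn hst in
lemma mcStep_out {u : ℝ} (h : u < 0 ∨ 1 ≤ u) (x : St) :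
    mcStep P u x = (Fintype.equivFin St).symm ⟨0, Fintype.card_pos⟩ := by
  have hval : min (sInf {k : ℕ | u < Fcdf P x k}) (Fintype.card St - 1) = 0 := by
    rcases h with h | h
    · have h0 : 0 ∈ {k : ℕ | u < Fcdf P x k} :=
        lt_of_lt_of_le h (Fcdf_nonneg hn x 0)
      have h2 := Nat.sInf_le h0
      omega
    · have hempty : {k : ℕ | u < Fcdf P x k} = ∅ := by
        ext k
        simp only [Set.mem_setOf_eq, Set.mem_empty_iff_false, iff_false, not_lt]
        exact le_trans (Fcdf_le_one hn hst x k) h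
      rw [hempty, Nat.sInf_empty]
      omega
  unfold mcStep
  exact congrArg _ (Fin.ext hval)

include hn hst in
lemma measurable_D (x y : St) : MeasurableSet {u : ℝ | mcStep P u x = y} := by
  classical
  have hsplit : {u : ℝ | mcStep P u x = y}
      = ((Set.Ico (loS P x y) (Fcdf P x (idx y))) ∩ Set.Ico 0 1)
        ∪ (if (Fintype.equivFin St).symm ⟨0, Fintype.card_pos⟩ = y
            then (Set.Ico (0:ℝ) 1)ᶜ else ∅) := by
    ext u
    simp only [Set.mem_setOf_eq, Set.mem_union, Set.mem_inter_iff, Set.mem_Ico]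
    by_cases hu : 0 ≤ u ∧ u < 1
    · rw [mcStep_eq_iff hn hst hu.1 hu.2 x y]
      constructor
      · intro h; exact Or.inl ⟨h, hu⟩
      · rintro (⟨h, _⟩ | h)
        · exact h
        · exfalso
          split at h
          · simp only [Set.mem_compl_iff, Set.mem_Ico] at h
            exact h hu
          · exact h
    · have hout : u < 0 ∨ 1 ≤ u := by
        rcases not_and_or.1 hu with h | h
        · left; linarith [not_le.1 h]
        · right; linarith [not_lt.1 h]
      rw [mcStep_out hn hst hout x]
      constructor
      · intro h
        right
        rw [if_pos h]
        simp only [Set.mem_compl_iff, Set.mem_Ico]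
        exact hu
      · rintro (⟨_, h⟩ | h)
        · exact absurd h hu
        · split at h
          · assumption
          · exact absurd h (Set.notMem_empty u)
  rw [hsplit]
  apply MeasurableSet.union
  · exact (measurableSet_Ico).inter measurableSet_Ico
  · split
    · exact measurableSet_Ico.compl
    · exact MeasurableSet.empty

end MC
section Walk
variable {St : Type} [Fintype St] [DecidableEq St] [Nonempty St]
variable (P : St → St → ℝ)

def Wk (x : St) (ω : ℝ) (i : ℕ) : St := walkFrom (mcStep P) (fun k => unif k ω) x i

lemma Wk_zero (x : St) (ω : ℝ) : Wk P x ω 0 = x := rfl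
lemma Wk_succ (x : St) (ω : ℝ) (i : ℕ) :
    Wk P x ω (i+1) = mcStep P (unif i ω) (Wk P x ω i) := rfl

def cellN (x : St) (n : ℕ) (v : ℕ → St) : Set ℝ := {ω | ∀ j ≤ n, Wk P x ω j = v j}

def wgtN (n : ℕ) (v : ℕ → St) : ℝ := ∏ j ∈ range n, P (v j) (v (j+1))

variable {P} (hn : ∀ x y, 0 ≤ P x y) (hst : ∀ x, ∑ y, P x y = 1)

include hn hst in
lemma measurable_Wk (x : St) (i : ℕ) (y : St) :
    MeasurableSet {ω : ℝ | Wk P x ω i = y} := by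
  induction i generalizing y with
  | zero =>
    by_cases h : x = y
    · convert MeasurableSet.univ
      ext ω; simp [Wk_zero, h]
    · convert MeasurableSet.empty
      ext ω; simp [Wk_zero, h]
  | succ i ih =>
    have hdec : {ω : ℝ | Wk P x ω (i+1) = y}
        = ⋃ z : St, ({ω | Wk P x ω i = z} ∩ (unif i) ⁻¹' {u | mcStep P u z = y}) := by
      ext ω
      simp only [Set.mem_setOf_eq, Set.mem_iUnion, Set.mem_inter_iff, Set.mem_preimage]
      constructor
      · intro h; exact ⟨Wk P x ω i, rfl, h⟩
      · rintro ⟨z, hz, h⟩; rw [Wk_succ, hz]; exact h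
    rw [hdec]
    exact MeasurableSet.iUnion
      (fun z => (ih z).inter ((measurable_unif i) (measurable_D hn hst z y)))

include hn in
lemma wgtN_nonneg (n : ℕ) (v : ℕ → St) : 0 ≤ wgtN P n v :=
  Finset.prod_nonneg fun j _ => hn _ _

include hn hst in
lemma measurable_cellN (x : St) (n : ℕ) (v : ℕ → St) :
    MeasurableSet (cellN P x n v) := by
  have : cellN P x n v = ⋂ (j : ℕ) (_ : j ≤ n), {ω | Wk P x ω j = v j} := by
    ext ω; simp [cellN, Set.mem_iInter]
  rw [this]
  exact MeasurableSet.iInter fun j => MeasurableSet.iInter fun _ => measurable_Wk hn hst x j (v j)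

lemma cellN_empty (x : St) (n : ℕ) (v : ℕ → St) (hv : v 0 ≠ x) : cellN P x n v = ∅ := by
  ext ω
  simp only [cellN, Set.mem_setOf_eq, Set.mem_empty_iff_false, iff_false, not_forall]
  exact ⟨0, by simp [Wk_zero], fun h => hv ((Wk_zero P x ω) ▸ h.symm)⟩

include hn hst in
lemma meas_cellN (x : St) (n : ℕ) (v : ℕ → St) (hv : v 0 = x) :
    μ (cellN P x n v) = ENNReal.ofReal (wgtN P n v) := by
  set c : ℕ → ℝ := fun j => loS P (v j) (v (j+1)) with hc
  set d : ℕ → ℝ := fun j => Fcdf P (v j) (idx (v (j+1))) with hd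
  have hcd : ∀ j, c j ≤ d j := by
    intro j
    rw [hc, hd]
    simp only
    rw [hiS_eq]
    have := hn (v j) (v (j+1))
    linarith
  have hdc : ∀ j, d j - c j = P (v j) (v (j+1)) := by
    intro j
    rw [hc, hd]
    simp only
    rw [hiS_eq]
    ring
  set Nbad : Set ℝ := ⋃ j : ℕ, {ω : ℝ | unif j ω = 1} with hNbad
  have hNnull : μ Nbad = 0 := measure_iUnion_null (fun j => null_unif_one j)
  set E' : Set ℝ := {ω : ℝ | ∀ j < n, c j ≤ unif j ω ∧ unif j ω < d j} with hE'
  have hiff : ∀ ω, ω ∉ Nbad → (ω ∈ cellN P x n v ↔ ω ∈ E') := by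
    intro ω hω
    have hu : ∀ j : ℕ, 0 ≤ unif j ω ∧ unif j ω < 1 := by
      intro j
      refine ⟨unif_nonneg j ω, lt_of_le_of_ne (unif_le_one j ω) ?_⟩
      intro h
      exact hω (Set.mem_iUnion.2 ⟨j, h⟩)
    constructor
    · intro hcell j hj
      have h1 : Wk P x ω j = v j := hcell j (by omega)
      have h2 : Wk P x ω (j+1) = v (j+1) := hcell (j+1) (by omega)
      rw [Wk_succ, h1] at h2
      exact (mcStep_eq_iff hn hst (hu j).1 (hu j).2 (v j) (v (j+1))).1 h2
    · intro hE j
      induction j with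
      | zero => intro _; rw [Wk_zero, hv]
      | succ j ihj =>
        intro hjn
        have hj : Wk P x ω j = v j := ihj (by omega) 
        rw [Wk_succ, hj]
        exact (mcStep_eq_iff hn hst (hu j).1 (hu j).2 (v j) (v (j+1))).2 (hE j (by omega))
  have hmeq : μ (cellN P x n v) = μ E' := by
    apply le_antisymm
    · calc μ (cellN P x n v) ≤ μ (E' ∪ Nbad) := by
            apply measure_mono
            intro ω hω
            by_cases h : ω ∈ Nbad
            · exact Or.inr h
            · exact Or.inl ((hiff ω h).1 hω)
        _ ≤ μ E' + μ Nbad := measure_union_le _ _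
        _ = μ E' := by rw [hNnull, add_zero]
    · calc μ E' ≤ μ (cellN P x n v ∪ Nbad) := by
            apply measure_mono
            intro ω hω
            by_cases h : ω ∈ Nbad
            · exact Or.inr h
            · exact Or.inl ((hiff ω h).2 hω)
        _ ≤ μ (cellN P x n v) + μ Nbad := measure_union_le _ _
        _ = μ (cellN P x n v) := by rw [hNnull, add_zero]
  rw [hmeq, hE', unif_joint n c d (fun j _ => loS_nonneg hn _ _) (fun j _ => hcd j)
    (fun j _ => Fcdf_le_one hn hst _ _)]
  congr 1
  rw [wgtN]
  exact Finset.prod_congr rfl fun j _ => hdc j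

end Walk

section Walk2
variable {St : Type} [Fintype St] [DecidableEq St] [Nonempty St]
variable (P : St → St → ℝ)

def vext (n : ℕ) (v : Fin (n+1) → St) : ℕ → St := fun j => v ⟨min j n, by omega⟩

def cellF (x : St) (n : ℕ) (v : Fin (n+1) → St) : Set ℝ := cellN P x n (vext n v)

def trunc (x : St) (ω : ℝ) (n : ℕ) : Fin (n+1) → St := fun j => Wk P x ω j

variable {St' : Type}

lemma vext_eq {n : ℕ} (v : Fin (n+1) → St') {j : ℕ} (hj : j ≤ n) :
    vext n v j = v ⟨j, by omega⟩ := by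
  unfold vext
  congr 1
  exact Fin.ext (by simp; omega)

lemma vext_zero {n : ℕ} (v : Fin (n+1) → St') : vext n v 0 = v 0 := by
  rw [vext_eq v (Nat.zero_le n)]
  congr 1

lemma vext_last {n : ℕ} (v : Fin (n+1) → St') : vext n v n = v (Fin.last n) := by
  rw [vext_eq v (le_refl n)]
  rfl

lemma mem_cellF {x : St} {n : ℕ} {v : Fin (n+1) → St} {ω : ℝ} :
    ω ∈ cellF P x n v ↔ ∀ j : Fin (n+1), Wk P x ω j = v j := by
  constructor
  · intro h j
    have := h (j:ℕ) (by omega)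
    rwa [vext_eq v (by omega : (j:ℕ) ≤ n), Fin.eta] at this
  · intro h j hj
    rw [vext_eq v hj]
    exact h ⟨j, by omega⟩

lemma trunc_mem_cellF (x : St) (n : ℕ) (ω : ℝ) : ω ∈ cellF P x n (trunc P x ω n) :=
  (mem_cellF P).2 (fun _ => rfl)

lemma cellF_eq_trunc {x : St} {n : ℕ} {v : Fin (n+1) → St} {ω : ℝ}
    (h : ω ∈ cellF P x n v) : trunc P x ω n = v :=
  funext fun j => (mem_cellF P).1 h j

lemma trunc_last (x : St) (ω : ℝ) (n : ℕ) :
    trunc P x ω n (Fin.last n) = Wk P x ω n := rfl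

variable {P} (hn : ∀ x y, 0 ≤ P x y) (hst : ∀ x, ∑ y, P x y = 1)

include hn hst in
lemma meas_decomp (x : St) (n : ℕ) (p : (Fin (n+1) → St) → Prop) [DecidablePred p] :
    μ {ω | p (trunc P x ω n)} = ∑ v ∈ Finset.univ.filter p, μ (cellF P x n v) := by
  have hev : {ω | p (trunc P x ω n)} = ⋃ v ∈ Finset.univ.filter p, cellF P x n v := by
    ext ω
    simp only [Set.mem_setOf_eq, Set.mem_iUnion, exists_prop, Finset.mem_filter,
      Finset.mem_univ, true_and]
    constructor
    · intro h; exact ⟨trunc P x ω n, h, trunc_mem_cellF P x n ω⟩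
    · rintro ⟨v, hp, hv⟩; rwa [cellF_eq_trunc P hv]
  rw [hev]
  apply measure_biUnion_finset
  · intro v _ v' _ hne
    rw [Function.onFun, Set.disjoint_left]
    intro ω hmem1 hmem2
    exact hne ((cellF_eq_trunc P hmem1).symm.trans (cellF_eq_trunc P hmem2))
  · exact fun v _ => measurable_cellN hn hst x n (vext n v)

include hn hst in
lemma meas_step (x : St) (n : ℕ) (p : (Fin (n+1) → St) → Prop) [DecidablePred p] (z y : St) :
    μ {ω | p (trunc P x ω n) ∧ Wk P x ω n = z ∧ Wk P x ω (n+1) = y}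
      = μ {ω | p (trunc P x ω n) ∧ Wk P x ω n = z} * ENNReal.ofReal (P z y) := by
  classical
  set p' : (Fin (n+1) → St) → Prop := fun v => p v ∧ v (Fin.last n) = z with hp'
  have h1 : {ω | p (trunc P x ω n) ∧ Wk P x ω n = z} = {ω | p' (trunc P x ω n)} := by
    ext ω
    rw [hp']
    simp only [Set.mem_setOf_eq]
    rw [trunc_last]
  have hext : ∀ v : Fin (n+1) → St, p' v →
      μ (cellF P x n v ∩ {ω | Wk P x ω (n+1) = y})
        = μ (cellF P x n v) * ENNReal.ofReal (P z y) := by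
    intro v hv
    by_cases hv0 : v 0 = x
    · set w : ℕ → St := fun j => if j ≤ n then vext n v j else y with hw
      have hww : ∀ j ≤ n, w j = vext n v j := by
        intro j hj; rw [hw]; simp only [if_pos hj]
      have hwy : w (n+1) = y := by
        rw [hw]; simp only [if_neg (by omega : ¬ (n+1 ≤ n))]
      have hcw : cellF P x n v ∩ {ω | Wk P x ω (n+1) = y} = cellN P x (n+1) w := by
        ext ω
        simp only [Set.mem_inter_iff, Set.mem_setOf_eq, cellF, cellN]
        constructor
        · rintro ⟨hc, hy⟩ j hj
          rcases Nat.lt_or_ge j (n+1) with h | h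
          · rw [hww j (by omega)]; exact hc j (by omega)
          · have hj1 : j = n+1 := by omega
            subst hj1
            rw [hwy]; exact hy
        · intro hall
          constructor
          · intro j hj
            have := hall j (by omega)
            rwa [hww j hj] at this
          · have := hall (n+1) (le_refl _)
            rwa [hwy] at this
      have hw0 : w 0 = x := by
        rw [hww 0 (Nat.zero_le n), vext_zero]
        exact hv0
      have hvx : vext n v 0 = x := by rw [vext_zero]; exact hv0
      rw [hcw, meas_cellN hn hst x (n+1) w hw0,
        show cellF P x n v = cellN P x n (vext n v) from rfl,
        meas_cellN hn hst x n (vext n v) hvx,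
        ← ENNReal.ofReal_mul (wgtN_nonneg hn n (vext n v))]
      congr 1
      rw [wgtN, wgtN, Finset.prod_range_succ]
      congr 1
      · apply Finset.prod_congr rfl
        intro j hj
        have hjn := Finset.mem_range.1 hj
        rw [hww j (by omega), hww (j+1) (by omega)]
      · rw [hww n (le_refl n), hwy, vext_last]
        rw [hv.2]
    · have he : cellF P x n v = ∅ := cellN_empty x n (vext n v) (by
        rw [vext_zero]; exact hv0)
      rw [he]
      simp
  have hev : {ω | p (trunc P x ω n) ∧ Wk P x ω n = z ∧ Wk P x ω (n+1) = y}
      = ⋃ v ∈ Finset.univ.filter p', (cellF P x n v ∩ {ω | Wk P x ω (n+1) = y}) := by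
    ext ω
    simp only [Set.mem_setOf_eq, Set.mem_iUnion, exists_prop, Finset.mem_filter,
      Finset.mem_univ, true_and, Set.mem_inter_iff]
    constructor
    · rintro ⟨hp, hz, hy⟩
      exact ⟨trunc P x ω n, ⟨hp, by rw [trunc_last]; exact hz⟩, trunc_mem_cellF P x n ω, hy⟩
    · rintro ⟨v, hpv, hvc, hy⟩
      have hveq := cellF_eq_trunc P hvc
      subst hveq
      exact ⟨hpv.1, by rw [← trunc_last P x ω n, hpv.2], hy⟩
  rw [hev, measure_biUnion_finset ?_ ?_, h1, meas_decomp hn hst x n p', Finset.sum_mul]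
  · apply Finset.sum_congr rfl
    intro v hv
    exact hext v (Finset.mem_filter.1 hv).2
  · intro v _ v' _ hne
    rw [Function.onFun, Set.disjoint_left]
    intro ω hmem1 hmem2
    exact hne ((cellF_eq_trunc P hmem1.1).symm.trans (cellF_eq_trunc P hmem2.1))
  · exact fun v _ => (measurable_cellN hn hst x n (vext n v)).inter
      (measurable_Wk hn hst x (n+1) y)

end Walk2

section Walk3
variable {St : Type} [Fintype St] [DecidableEq St] [Nonempty St]
variable (P : St → St → ℝ)

def mpow : ℕ → St → St → ℝ
  | 0, x, y => if x = y then 1 else 0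
  | (i+1), x, y => ∑ z, mpow i x z * P z y

def HitSet (x b : St) (j : ℕ) : Set ℝ :=
  {ω | Wk P x ω j = b ∧ ∀ i < j, Wk P x ω i ≠ b}

variable {P} (hn : ∀ x y, 0 ≤ P x y) (hst : ∀ x, ∑ y, P x y = 1)

include hn in
lemma mpow_nonneg (i : ℕ) (x y : St) : 0 ≤ mpow P i x y := by
  induction i generalizing x y with
  | zero =>
    unfold mpow
    split <;> norm_num
  | succ i ih =>
    unfold mpow
    exact Finset.sum_nonneg fun z _ => mul_nonneg (ih x z) (hn z y)

include hn hst in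
lemma meas_Wk_eq (x : St) (i : ℕ) (y : St) :
    μ {ω : ℝ | Wk P x ω i = y} = ENNReal.ofReal (mpow P i x y) := by
  induction i generalizing y with
  | zero =>
    unfold mpow
    by_cases h : x = y
    · rw [if_pos h]
      have : {ω : ℝ | Wk P x ω 0 = y} = Set.univ := by
        ext ω; simp [Wk_zero, h]
      rw [this]
      simp
    · rw [if_neg h]
      have : {ω : ℝ | Wk P x ω 0 = y} = ∅ := by
        ext ω; simp [Wk_zero, h]
      rw [this]
      simp
  | succ i ih =>
    classical
    have hstep : ∀ z : St, μ ({ω : ℝ | Wk P x ω i = z} ∩ {ω | Wk P x ω (i+1) = y})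
        = μ {ω : ℝ | Wk P x ω i = z} * ENNReal.ofReal (P z y) := by
      intro z
      have h := meas_step hn hst x i (fun _ => True) z y
      have e1 : {ω : ℝ | (fun _ : Fin (i+1) → St => True) (trunc P x ω i)
          ∧ Wk P x ω i = z ∧ Wk P x ω (i+1) = y}
          = {ω : ℝ | Wk P x ω i = z} ∩ {ω | Wk P x ω (i+1) = y} := by
        ext ω; simp [Set.mem_inter_iff]
      have e2 : {ω : ℝ | (fun _ : Fin (i+1) → St => True) (trunc P x ω i)
          ∧ Wk P x ω i = z} = {ω : ℝ | Wk P x ω i = z} := by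
        ext ω; simp
      rw [e1, e2] at h
      exact h
    have hev : {ω : ℝ | Wk P x ω (i+1) = y}
        = ⋃ z ∈ (Finset.univ : Finset St),
            ({ω : ℝ | Wk P x ω i = z} ∩ {ω | Wk P x ω (i+1) = y}) := by
      ext ω
      simp only [Set.mem_setOf_eq, Set.mem_iUnion, Set.mem_inter_iff, exists_prop]
      constructor
      · intro h; exact ⟨Wk P x ω i, Finset.mem_univ _, rfl, h⟩
      · rintro ⟨z, _, _, h⟩; exact h
    rw [hev, measure_biUnion_finset ?_ ?_]
    · rw [Finset.sum_congr rfl (fun z _ => (hstep z).trans (by rw [ih z]))]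
      rw [show (mpow P (i+1) x y) = ∑ z, mpow P i x z * P z y from rfl]
      rw [ENNReal.ofReal_sum_of_nonneg (fun z _ => mul_nonneg (mpow_nonneg hn i x z) (hn z y))]
      exact Finset.sum_congr rfl fun z _ =>
        (ENNReal.ofReal_mul (mpow_nonneg hn i x z)).symm
    · intro z _ z' _ hne
      rw [Function.onFun, Set.disjoint_left]
      rintro ω ⟨h1, _⟩ ⟨h2, _⟩
      exact hne (h1.symm.trans h2)
    · exact fun z _ => (measurable_Wk hn hst x i z).inter (measurable_Wk hn hst x (i+1) y)

include hn hst in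
lemma measurable_HitSet (x b : St) (j : ℕ) : MeasurableSet (HitSet P x b j) := by
  have : HitSet P x b j = {ω : ℝ | Wk P x ω j = b}
      ∩ ⋂ (i : ℕ) (_ : i < j), {ω : ℝ | Wk P x ω i = b}ᶜ := by
    ext ω
    simp [HitSet, Set.mem_iInter]
  rw [this]
  exact (measurable_Wk hn hst x j b).inter
    (MeasurableSet.iInter fun i => MeasurableSet.iInter fun _ =>
      (measurable_Wk hn hst x i b).compl)

include hn hst in
lemma meas_hit_step (a b : St) (j : ℕ) : ∀ (m : ℕ) (y : St),
    μ (HitSet P a b j ∩ {ω : ℝ | Wk P a ω (j+m) = y})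
      = μ (HitSet P a b j) * ENNReal.ofReal (mpow P m b y) := by
  intro m
  induction m with
  | zero =>
    intro y
    by_cases h : b = y
    · have e1 : HitSet P a b j ∩ {ω : ℝ | Wk P a ω (j+0) = y} = HitSet P a b j := by
        apply Set.inter_eq_self_of_subset_left
        intro ω hω
        show Wk P a ω (j+0) = y
        rw [← h]
        exact hω.1
      rw [e1, show mpow P 0 b y = 1 from if_pos h]
      simp
    · have e1 : HitSet P a b j ∩ {ω : ℝ | Wk P a ω (j+0) = y} = ∅ := by
        ext ω
        simp only [Set.mem_inter_iff, Set.mem_setOf_eq, Set.mem_empty_iff_false, iff_false,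
          not_and]
        intro hω hy
        exact h (hω.1.symm.trans hy)
      rw [e1, show mpow P 0 b y = 0 from if_neg h]
      simp
  | succ m ih =>
    intro y
    classical
    set n := j + m with hn'
    set p : (Fin (n+1) → St) → Prop :=
      fun v => v ⟨j, by omega⟩ = b ∧ ∀ i : Fin (n+1), (i:ℕ) < j → v i ≠ b with hp
    have hpe : ∀ ω, (p (trunc P a ω n)) ↔ ω ∈ HitSet P a b j := by
      intro ω
      rw [hp]
      simp only [HitSet, Set.mem_setOf_eq, trunc]
      constructor
      · rintro ⟨h1, h2⟩
        exact ⟨h1, fun i hi => h2 ⟨i, by omega⟩ hi⟩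
      · rintro ⟨h1, h2⟩
        exact ⟨h1, fun i hi => h2 i hi⟩
    have hps : ∀ z, {ω : ℝ | p (trunc P a ω n) ∧ Wk P a ω n = z}
        = HitSet P a b j ∩ {ω : ℝ | Wk P a ω (j+m) = z} := by
      intro z
      ext ω
      simp only [Set.mem_setOf_eq, Set.mem_inter_iff]
      rw [hpe ω]
    have hev : HitSet P a b j ∩ {ω : ℝ | Wk P a ω (j+(m+1)) = y}
        = ⋃ z ∈ (Finset.univ : Finset St),
            {ω : ℝ | p (trunc P a ω n) ∧ Wk P a ω n = z ∧ Wk P a ω (n+1) = y} := by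
      ext ω
      simp only [Set.mem_inter_iff, Set.mem_setOf_eq, Set.mem_iUnion, exists_prop]
      constructor
      · rintro ⟨hH, hy⟩
        exact ⟨Wk P a ω n, Finset.mem_univ _, (hpe ω).2 hH, rfl,
          by rw [show n+1 = j+(m+1) by omega]; exact hy⟩
      · rintro ⟨z, _, hpv, _, hy⟩
        exact ⟨(hpe ω).1 hpv, by rw [show j+(m+1) = n+1 by omega]; exact hy⟩
    rw [hev, measure_biUnion_finset ?_ ?_]
    · rw [Finset.sum_congr rfl (fun z _ => meas_step hn hst a n p z y)]
      rw [Finset.sum_congr rfl (fun z _ => by rw [hps z, ih z])]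
      rw [show mpow P (m+1) b y = ∑ z, mpow P m b z * P z y from rfl]
      rw [ENNReal.ofReal_sum_of_nonneg (fun z _ => mul_nonneg (mpow_nonneg hn m b z) (hn z y)),
        Finset.mul_sum]
      apply Finset.sum_congr rfl
      intro z _
      rw [ENNReal.ofReal_mul (mpow_nonneg hn m b z), mul_assoc]
    · intro z _ z' _ hne
      rw [Function.onFun, Set.disjoint_left]
      rintro ω ⟨_, h1, _⟩ ⟨_, h2, _⟩
      exact hne (h1.symm.trans h2)
    · intro z _
      have : {ω : ℝ | p (trunc P a ω n) ∧ Wk P a ω n = z ∧ Wk P a ω (n+1) = y}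
          = (HitSet P a b j ∩ {ω : ℝ | Wk P a ω (j+m) = z}) ∩ {ω : ℝ | Wk P a ω (n+1) = y} := by
        rw [← hps z]
        ext ω
        simp only [Set.mem_setOf_eq, Set.mem_inter_iff]
        tauto
      rw [this]
      exact ((measurable_HitSet hn hst a b j).inter (measurable_Wk hn hst a (j+m) z)).inter
        (measurable_Wk hn hst a (n+1) y)

end Walk3

lemma sum_tri_le (f : ℕ → ℕ → ℝ≥0∞) (t : ℕ) :
    ∑ i ∈ range (t+1), ∑ j ∈ range (i+1), f j (i-j)
      ≤ ∑ j ∈ range (t+1), ∑ m ∈ range (t+1), f j m := by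
  classical
  rw [Finset.sum_sigma' (range (t+1)) (fun i => range (i+1)) (fun i j => f j (i-j))]
  set e : ((_ : ℕ) × ℕ) → ℕ × ℕ := fun p => (p.2, p.1 - p.2) with he
  have hinj : ∀ p ∈ (range (t+1)).sigma (fun i => range (i+1)),
      ∀ q ∈ (range (t+1)).sigma (fun i => range (i+1)), e p = e q → p = q := by
    intro p hp q hq heq
    rw [Finset.mem_sigma, Finset.mem_range, Finset.mem_range] at hp hq
    rw [he, Prod.mk.injEq] at heq
    obtain ⟨h1, h2⟩ := heq
    have : p.1 = q.1 := by omega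
    exact Sigma.ext this (by rw [h1])
  have himg : ((range (t+1)).sigma (fun i => range (i+1))).image e
      ⊆ (range (t+1)) ×ˢ (range (t+1)) := by
    intro q hq
    rw [Finset.mem_image] at hq
    obtain ⟨p, hp, rfl⟩ := hq
    rw [Finset.mem_sigma, Finset.mem_range, Finset.mem_range] at hp
    rw [Finset.mem_product, Finset.mem_range, Finset.mem_range]
    constructor <;> [skip; skip] <;> simp only [he] <;> omega
  calc ∑ p ∈ (range (t+1)).sigma (fun i => range (i+1)), f p.2 (p.1 - p.2)
      = ∑ q ∈ ((range (t+1)).sigma (fun i => range (i+1))).image e, f q.1 q.2 :=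
        (Finset.sum_image (f := fun q : ℕ × ℕ => f q.1 q.2) hinj).symm
    _ ≤ ∑ q ∈ (range (t+1)) ×ˢ (range (t+1)), f q.1 q.2 :=
        Finset.sum_le_sum_of_subset himg
    _ = ∑ j ∈ range (t+1), ∑ m ∈ range (t+1), f j m :=
        Finset.sum_product _ _ _

lemma sum_tri_ge (f : ℕ → ℕ → ℝ≥0∞) (t s : ℕ) :
    ∑ j ∈ range (t+1), ∑ m ∈ range (s+1), f j m
      ≤ ∑ i ∈ range (t+s+1), ∑ j ∈ range (i+1), f j (i-j) := by
  classical
  rw [Finset.sum_sigma' (range (t+s+1)) (fun i => range (i+1)) (fun i j => f j (i-j)),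
    ← Finset.sum_product (range (t+1)) (range (s+1)) (fun q => f q.1 q.2)]
  set e : ℕ × ℕ → ((_ : ℕ) × ℕ) := fun q => ⟨q.1 + q.2, q.1⟩ with he
  have hinj : ∀ p ∈ (range (t+1)) ×ˢ (range (s+1)),
      ∀ q ∈ (range (t+1)) ×ˢ (range (s+1)), e p = e q → p = q := by
    intro p _ q _ heq
    have h1 : p.1 + p.2 = q.1 + q.2 := congrArg Sigma.fst heq
    have h2 : p.1 = q.1 := congrArg Sigma.snd heq
    exact Prod.ext h2 (by omega)
  have himg : ((range (t+1)) ×ˢ (range (s+1))).image e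
      ⊆ (range (t+s+1)).sigma (fun i => range (i+1)) := by
    intro q hq
    rw [Finset.mem_image] at hq
    obtain ⟨p, hp, rfl⟩ := hq
    rw [Finset.mem_product, Finset.mem_range, Finset.mem_range] at hp
    rw [Finset.mem_sigma, Finset.mem_range, Finset.mem_range]
    simp only [he]
    omega
  calc ∑ q ∈ (range (t+1)) ×ˢ (range (s+1)), f q.1 q.2
      = ∑ p ∈ ((range (t+1)) ×ˢ (range (s+1))).image e, f p.2 (p.1 - p.2) := by
        rw [Finset.sum_image (f := fun p : (_ : ℕ) × ℕ => f p.2 (p.1 - p.2)) hinj]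
        apply Finset.sum_congr rfl
        intro q _
        simp only [he]
        congr 1
        omega
    _ ≤ ∑ p ∈ (range (t+s+1)).sigma (fun i => range (i+1)), f p.2 (p.1 - p.2) :=
        Finset.sum_le_sum_of_subset himg

section Walk4
variable {St : Type} [Fintype St] [DecidableEq St] [Nonempty St]
variable {P : St → St → ℝ} (hn : ∀ x y, 0 ≤ P x y) (hst : ∀ x, ∑ y, P x y = 1)

include hn hst in
lemma meas_exists_hit (a b : St) (t : ℕ) :
    μ {ω : ℝ | ∃ i ≤ t, Wk P a ω i = b}
      = ∑ j ∈ range (t+1), μ (HitSet P a b j) := by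
  classical
  have hev : {ω : ℝ | ∃ i ≤ t, Wk P a ω i = b} = ⋃ j ∈ range (t+1), HitSet P a b j := by
    ext ω
    simp only [Set.mem_setOf_eq, Set.mem_iUnion, exists_prop, Finset.mem_range]
    constructor
    · rintro ⟨i, hi, hW⟩
      have hex : ∃ k, Wk P a ω k = b := ⟨i, hW⟩
      refine ⟨Nat.find hex, ?_, Nat.find_spec hex, fun i' hi' => Nat.find_min hex hi'⟩
      have := Nat.find_min' hex hW
      omega
    · rintro ⟨j, hj, h1, _⟩
      exact ⟨j, by omega, h1⟩
  rw [hev]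
  apply measure_biUnion_finset
  · intro j _ j' _ hne
    rw [Function.onFun, Set.disjoint_left]
    rintro ω ⟨hj1, hj2⟩ ⟨hj1', hj2'⟩
    rcases Nat.lt_or_ge j j' with h | h
    · exact hj2' j h hj1
    · exact hj2 j' (by omega) hj1'
  · exact fun j _ => measurable_HitSet hn hst a b j

include hn hst in
lemma ofReal_mpow_dec (a b : St) (i : ℕ) :
    ENNReal.ofReal (mpow P i a b)
      = ∑ j ∈ range (i+1), μ (HitSet P a b j) * ENNReal.ofReal (mpow P (i-j) b b) := by
  classical
  rw [← meas_Wk_eq hn hst a i b]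
  have hev : {ω : ℝ | Wk P a ω i = b}
      = ⋃ j ∈ range (i+1), (HitSet P a b j ∩ {ω : ℝ | Wk P a ω i = b}) := by
    ext ω
    simp only [Set.mem_setOf_eq, Set.mem_iUnion, exists_prop, Finset.mem_range,
      Set.mem_inter_iff]
    constructor
    · intro hW
      have hex : ∃ k, Wk P a ω k = b := ⟨i, hW⟩
      refine ⟨Nat.find hex, ?_, ⟨Nat.find_spec hex, fun i' hi' => Nat.find_min hex hi'⟩, hW⟩
      have := Nat.find_min' hex hW
      omega
    · rintro ⟨j, _, _, h⟩; exact h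
  rw [hev, measure_biUnion_finset ?_ ?_]
  · apply Finset.sum_congr rfl
    intro j hj
    have hji := Finset.mem_range.1 hj
    have hh := meas_hit_step hn hst a b j (i-j) b
    rw [show j + (i-j) = i from by omega] at hh
    exact hh
  · intro j _ j' _ hne
    rw [Function.onFun, Set.disjoint_left]
    rintro ω ⟨⟨hj1, hj2⟩, _⟩ ⟨⟨hj1', hj2'⟩, _⟩
    rcases Nat.lt_or_ge j j' with h | h
    · exact hj2' j h hj1
    · exact hj2 j' (by omega) hj1'
  · exact fun j _ => (measurable_HitSet hn hst a b j).inter (measurable_Wk hn hst a i b)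

include hn hst in
lemma main_bounds (a b : St) (t s : ℕ) :
    (∑ i ∈ range (t+1), ENNReal.ofReal (mpow P i a b)
        ≤ μ {ω : ℝ | ∃ i ≤ t, Wk P a ω i = b}
            * ∑ m ∈ range (t+1), ENNReal.ofReal (mpow P m b b))
    ∧ (μ {ω : ℝ | ∃ i ≤ t, Wk P a ω i = b}
          * ∑ m ∈ range (s+1), ENNReal.ofReal (mpow P m b b)
        ≤ ∑ i ∈ range (t+s+1), ENNReal.ofReal (mpow P i a b)) := by
  rw [meas_exists_hit hn hst a b t]
  have hfact : ∀ (r : ℕ),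
      (∑ j ∈ range (t+1), μ (HitSet P a b j)) * ∑ m ∈ range (r+1), ENNReal.ofReal (mpow P m b b)
        = ∑ j ∈ range (t+1), ∑ m ∈ range (r+1),
            μ (HitSet P a b j) * ENNReal.ofReal (mpow P m b b) := by
    intro r
    rw [Finset.sum_mul]
    exact Finset.sum_congr rfl fun j _ => Finset.mul_sum _ _ _
  constructor
  · calc ∑ i ∈ range (t+1), ENNReal.ofReal (mpow P i a b)
        = ∑ i ∈ range (t+1), ∑ j ∈ range (i+1),
            μ (HitSet P a b j) * ENNReal.ofReal (mpow P (i-j) b b) :=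
          Finset.sum_congr rfl fun i _ => ofReal_mpow_dec hn hst a b i
      _ ≤ ∑ j ∈ range (t+1), ∑ m ∈ range (t+1),
            μ (HitSet P a b j) * ENNReal.ofReal (mpow P m b b) :=
          sum_tri_le (fun j m => μ (HitSet P a b j) * ENNReal.ofReal (mpow P m b b)) t
      _ = _ := (hfact t).symm
  · calc (∑ j ∈ range (t+1), μ (HitSet P a b j))
          * ∑ m ∈ range (s+1), ENNReal.ofReal (mpow P m b b)
        = ∑ j ∈ range (t+1), ∑ m ∈ range (s+1),
            μ (HitSet P a b j) * ENNReal.ofReal (mpow P m b b) := hfact s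
      _ ≤ ∑ i ∈ range (t+s+1), ∑ j ∈ range (i+1),
            μ (HitSet P a b j) * ENNReal.ofReal (mpow P (i-j) b b) :=
          sum_tri_ge (fun j m => μ (HitSet P a b j) * ENNReal.ofReal (mpow P m b b)) t s
      _ = ∑ i ∈ range (t+s+1), ENNReal.ofReal (mpow P i a b) :=
          (Finset.sum_congr rfl fun i _ => ofReal_mpow_dec hn hst a b i).symm

end Walk4

lemma mpow_eq_pow {St : Type} [Fintype St] [DecidableEq St] [Nonempty St]
    (P : Matrix St St ℝ) (i : ℕ) (x y : St) :
    mpow (fun a b => P a b) i x y = (P ^ i) x y := by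
  induction i generalizing y with
  | zero =>
    rw [pow_zero]
    unfold mpow
    rw [Matrix.one_apply]
  | succ i ih =>
    rw [pow_succ, Matrix.mul_apply]
    unfold mpow
    exact Finset.sum_congr rfl fun z _ => by rw [ih]

end MCAux

/-- **Lemma (hitting probabilities via expected numbers of visits).**  Let `(X_i)` be a
Markov chain on a finite state space with (stochastic) transition matrix `P`, let
`N_t(b)` be the number of visits to `b` up to time `t` and `T_b` the hitting time of `b`.
Then for all states `a, b` and all `t, s`:
`E_a[N_t(b)]/E_b[N_t(b)] ≤ Pr_a[T_b ≤ t] ≤ E_a[N_{t+s}(b)]/E_b[N_s(b)]`, i.e.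
`(∑_{i=0}^t P^i(a,b))/(∑_{i=0}^t P^i(b,b)) ≤ Pr_a[T_b ≤ t]
  ≤ (∑_{i=0}^{t+s} P^i(a,b))/(∑_{i=0}^s P^i(b,b))`. -/
theorem mc_hitting (St : Type) [Fintype St] [DecidableEq St] [Nonempty St]
    (P : Matrix St St ℝ) (hnonneg : ∀ x y, 0 ≤ P x y) (hstoch : ∀ x, ∑ y, P x y = 1)
    (a b : St) (t s : ℕ) :
    (∑ i ∈ Finset.range (t + 1), (P ^ i) a b) / (∑ i ∈ Finset.range (t + 1), (P ^ i) b b)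
      ≤ (μ {ω | ∃ i ≤ t,
          walkFrom (mcStep (fun x y => P x y)) (fun k => unif k ω) a i = b}).toReal ∧
    (μ {ω | ∃ i ≤ t,
        walkFrom (mcStep (fun x y => P x y)) (fun k => unif k ω) a i = b}).toReal
      ≤ (∑ i ∈ Finset.range (t + s + 1), (P ^ i) a b) /
          (∑ i ∈ Finset.range (s + 1), (P ^ i) b b) := by
  classical
  have hn : ∀ x y, 0 ≤ (fun x y => P x y) x y := hnonneg
  have hst : ∀ x, ∑ y, (fun x y => P x y) x y = 1 := hstoch
  obtain ⟨h1, h2⟩ := MCAux.main_bounds hn hst a b t s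
  have hpos : ∀ (i : ℕ) (x y : St), 0 ≤ (P ^ i) x y := fun i x y => by
    rw [← MCAux.mpow_eq_pow]
    exact MCAux.mpow_nonneg hn i x y
  have hsum : ∀ (r : ℕ) (x y : St),
      ∑ i ∈ Finset.range (r+1), ENNReal.ofReal (MCAux.mpow (fun x y => P x y) i x y)
        = ENNReal.ofReal (∑ i ∈ Finset.range (r+1), (P ^ i) x y) := by
    intro r x y
    rw [ENNReal.ofReal_sum_of_nonneg (fun i _ => hpos i x y)]
    exact Finset.sum_congr rfl fun i _ => by rw [MCAux.mpow_eq_pow P i x y]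
  rw [hsum t a b, hsum t b b] at h1
  rw [hsum (t+s) a b, hsum s b b] at h2
  set H : ℝ≥0∞ := μ {ω : ℝ | ∃ i ≤ t, MCAux.Wk (fun x y => P x y) a ω i = b} with hH
  have hHfin : H ≠ ⊤ := measure_ne_top μ _
  have hSA0 : 0 ≤ ∑ i ∈ Finset.range (t+1), (P ^ i) a b :=
    Finset.sum_nonneg fun i _ => hpos i a b
  have hSA0' : 0 ≤ ∑ i ∈ Finset.range (t+s+1), (P ^ i) a b :=
    Finset.sum_nonneg fun i _ => hpos i a b
  have hSB1 : (1:ℝ) ≤ ∑ i ∈ Finset.range (t+1), (P ^ i) b b := by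
    calc (1:ℝ) = (P ^ 0) b b := by rw [pow_zero, Matrix.one_apply_eq]
      _ ≤ _ := Finset.single_le_sum (f := fun i => (P ^ i) b b)
          (fun i _ => hpos i b b) (Finset.mem_range.2 (by omega))
  have hSB1' : (1:ℝ) ≤ ∑ i ∈ Finset.range (s+1), (P ^ i) b b := by
    calc (1:ℝ) = (P ^ 0) b b := by rw [pow_zero, Matrix.one_apply_eq]
      _ ≤ _ := Finset.single_le_sum (f := fun i => (P ^ i) b b)
          (fun i _ => hpos i b b) (Finset.mem_range.2 (by omega))
  have hSB0 : 0 ≤ ∑ i ∈ Finset.range (t+1), (P ^ i) b b := by linarith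
  have hSB0' : 0 ≤ ∑ i ∈ Finset.range (s+1), (P ^ i) b b := by linarith
  have h1r : (∑ i ∈ Finset.range (t+1), (P ^ i) a b)
      ≤ H.toReal * ∑ i ∈ Finset.range (t+1), (P ^ i) b b := by
    have := ENNReal.toReal_mono (ENNReal.mul_ne_top hHfin ENNReal.ofReal_ne_top) h1
    rwa [ENNReal.toReal_ofReal hSA0, ENNReal.toReal_mul, ENNReal.toReal_ofReal hSB0] at this
  have h2r : H.toReal * (∑ i ∈ Finset.range (s+1), (P ^ i) b b)
      ≤ ∑ i ∈ Finset.range (t+s+1), (P ^ i) a b := by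
    have := ENNReal.toReal_mono ENNReal.ofReal_ne_top h2
    rwa [ENNReal.toReal_ofReal hSA0', ENNReal.toReal_mul, ENNReal.toReal_ofReal hSB0'] at this
  constructor
  · rw [div_le_iff₀ (by linarith : (0:ℝ) < ∑ i ∈ Finset.range (t+1), (P ^ i) b b)]
    exact h1r
  · rw [le_div_iff₀ (by linarith : (0:ℝ) < ∑ i ∈ Finset.range (s+1), (P ^ i) b b)]
    exact h2r

end FrogWork
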